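/- arXiv:math/0109131 — 8 statements merged into one kernel-verified Lean document; each statement's English description precedes it below -/
import Mathlib

section
/- For every ε ∈ (0, π/2), the zero set of F_ε(x₁,x₂,z) = cos²ε · cosh(x₁/cos ε) − sin²ε · cosh(z/sin ε) − cos x₂ is a regular level set: the gradient of F_ε does not vanish at any point where F_ε = 0. -/
/-- The function `F_ε` whose zero set is Scherk's second surface. -/
noncomputable def scherkF (ε : ℝ) (p : ℝ × ℝ × ℝ) : ℝ :=
  (Real.cos ε) ^ 2 * Real.cosh (p.1 / Real.cos ε)
    - (Real.sin ε) ^ 2 * Real.cosh (p.2.2 / Real.sin ε) - Real.cos p.2.1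

set_option maxHeartbeats 1000000 in
/-- For every `ε ∈ (0, π/2)`, `0` is a regular value of `F_ε`: the
differential of `F_ε` does not vanish at any point of the zero set of `F_ε`. -/
theorem scherk_stmt2 (ε : ℝ) (hε : ε ∈ Set.Ioo 0 (Real.pi / 2))
    (p : ℝ × ℝ × ℝ) (hp : scherkF ε p = 0) :
    fderiv ℝ (scherkF ε) p ≠ 0 := by
  obtain ⟨hε0, hε1⟩ := hε
  have hc : 0 < Real.cos ε := Real.cos_pos_of_mem_Ioo ⟨by linarith [Real.pi_pos], hε1⟩
  have hs : 0 < Real.sin ε := Real.sin_pos_of_pos_of_lt_pi hε0 (by linarith [Real.pi_pos])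
  set c := Real.cos ε with hcdef
  set s := Real.sin ε with hsdef
  -- projections
  set A : ℝ × ℝ × ℝ →L[ℝ] ℝ := ContinuousLinearMap.fst ℝ ℝ (ℝ × ℝ) with hA
  set B : ℝ × ℝ × ℝ →L[ℝ] ℝ :=
    (ContinuousLinearMap.fst ℝ ℝ ℝ).comp (ContinuousLinearMap.snd ℝ ℝ (ℝ × ℝ)) with hB
  set C : ℝ × ℝ × ℝ →L[ℝ] ℝ :=
    (ContinuousLinearMap.snd ℝ ℝ ℝ).comp (ContinuousLinearMap.snd ℝ ℝ (ℝ × ℝ)) with hC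
  set d₁ : ℝ := c ^ 2 * (Real.sinh (p.1 / c) * (1 / c)) with hd₁
  set d₂ : ℝ := -Real.sin p.2.1 with hd₂
  set d₃ : ℝ := s ^ 2 * (Real.sinh (p.2.2 / s) * (1 / s)) with hd₃
  have hAd : HasFDerivAt (fun q : ℝ × ℝ × ℝ => q.1) A p := hasFDerivAt_fst
  have hBd : HasFDerivAt (fun q : ℝ × ℝ × ℝ => q.2.1) B p := hasFDerivAt_snd.fst
  have hCd : HasFDerivAt (fun q : ℝ × ℝ × ℝ => q.2.2) C p := hasFDerivAt_snd.snd
  have h1 : HasDerivAt (fun t : ℝ => c ^ 2 * Real.cosh (t / c))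
      (c ^ 2 * (Real.sinh (p.1 / c) * (1 / c))) p.1 := by
    have : HasDerivAt (fun t : ℝ => t / c) (1 / c) p.1 := by
      simpa using (hasDerivAt_id p.1).div_const c
    exact ((this.cosh)).const_mul (c ^ 2)
  have h3 : HasDerivAt (fun t : ℝ => s ^ 2 * Real.cosh (t / s))
      (s ^ 2 * (Real.sinh (p.2.2 / s) * (1 / s))) p.2.2 := by
    have : HasDerivAt (fun t : ℝ => t / s) (1 / s) p.2.2 := by
      simpa using (hasDerivAt_id p.2.2).div_const s
    exact ((this.cosh)).const_mul (s ^ 2)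
  have h2 : HasDerivAt (fun t : ℝ => Real.cos t) (-Real.sin p.2.1) p.2.1 :=
    Real.hasDerivAt_cos p.2.1
  have hF1 : HasFDerivAt (fun q : ℝ × ℝ × ℝ => c ^ 2 * Real.cosh (q.1 / c)) (d₁ • A) p :=
    h1.comp_hasFDerivAt p hAd
  have hF2 : HasFDerivAt (fun q : ℝ × ℝ × ℝ => Real.cos q.2.1) (d₂ • B) p :=
    by have := h2.comp_hasFDerivAt p hBd; exact this
  have hF3 : HasFDerivAt (fun q : ℝ × ℝ × ℝ => s ^ 2 * Real.cosh (q.2.2 / s)) (d₃ • C) p :=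
    by have := h3.comp_hasFDerivAt p hCd; exact this
  have hL : HasFDerivAt (scherkF ε) (d₁ • A - d₃ • C - d₂ • B) p := by
    have := (hF1.sub hF3).sub hF2
    exact this
  rw [hL.fderiv]
  intro h
  have hv1 : d₁ = 0 := by
    have := congrArg (fun (L : ℝ × ℝ × ℝ →L[ℝ] ℝ) => L (1, 0, 0)) h
    simpa [hA, hB, hC, ContinuousLinearMap.sub_apply, ContinuousLinearMap.smul_apply] using this
  have hv2 : d₂ = 0 := by
    have := congrArg (fun (L : ℝ × ℝ × ℝ →L[ℝ] ℝ) => L (0, 1, 0)) h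
    simpa [hA, hB, hC, ContinuousLinearMap.sub_apply, ContinuousLinearMap.smul_apply] using this
  have hv3 : d₃ = 0 := by
    have := congrArg (fun (L : ℝ × ℝ × ℝ →L[ℝ] ℝ) => L (0, 0, 1)) h
    simpa [hA, hB, hC, ContinuousLinearMap.sub_apply, ContinuousLinearMap.smul_apply] using this
  -- derive x₁ = 0 and z = 0
  have hx1 : p.1 = 0 := by
    have hsinh : Real.sinh (p.1 / c) = 0 := by
      have hc2 : c ^ 2 * (1 / c) ≠ 0 := by positivity
      rw [hd₁] at hv1
      have : c ^ 2 * (1 / c) * Real.sinh (p.1 / c) = 0 := by linarith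
      exact (mul_eq_zero.mp this).resolve_left hc2
    have := Real.sinh_eq_zero.mp hsinh
    field_simp at this
    simpa using this
  have hz : p.2.2 = 0 := by
    have hsinh : Real.sinh (p.2.2 / s) = 0 := by
      have hs2 : s ^ 2 * (1 / s) ≠ 0 := by positivity
      rw [hd₃] at hv3
      have : s ^ 2 * (1 / s) * Real.sinh (p.2.2 / s) = 0 := by linarith
      exact (mul_eq_zero.mp this).resolve_left hs2
    have := Real.sinh_eq_zero.mp hsinh
    field_simp at this
    simpa using this
  have hsinx : Real.sin p.2.1 = 0 := by
    rw [hd₂] at hv2; linarith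
  have hcosx : Real.cos p.2.1 ^ 2 = 1 := by
    have := Real.sin_sq_add_cos_sq p.2.1
    rw [hsinx] at this; simpa using this
  have hFp : c ^ 2 - s ^ 2 - Real.cos p.2.1 = 0 := by
    have : scherkF ε p = c ^ 2 * Real.cosh (p.1 / c) - s ^ 2 * Real.cosh (p.2.2 / s)
        - Real.cos p.2.1 := rfl
    rw [this, hx1, hz] at hp
    simpa using hp
  have hpyth : s ^ 2 + c ^ 2 = 1 := Real.sin_sq_add_cos_sq ε
  clear h hL hF1 hF2 hF3 hAd hBd hCd hv1 hv2 hv3 hp hsinx hx1 hz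
  nlinarith [sq_nonneg (s * c), mul_pos hs hc]
end

section
/- For every ε ∈ (0, π/2), the function F_ε(x₁,x₂,z) = cos²ε · cosh(x₁/cos ε) − sin²ε · cosh(z/sin ε) − cos x₂ satisfies div(∇F_ε/|∇F_ε|) = 0 at every point of its zero set; equivalently, |∇F_ε|² ΔF_ε = ∇²F_ε(∇F_ε, ∇F_ε) holds on {F_ε = 0}. -/
/-- Partial derivative with respect to the first coordinate. -/
noncomputable def pd1 (f : ℝ × ℝ × ℝ → ℝ) (p : ℝ × ℝ × ℝ) : ℝ :=
  deriv (fun t => f (t, p.2.1, p.2.2)) p.1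

/-- Partial derivative with respect to the second coordinate. -/
noncomputable def pd2 (f : ℝ × ℝ × ℝ → ℝ) (p : ℝ × ℝ × ℝ) : ℝ :=
  deriv (fun t => f (p.1, t, p.2.2)) p.2.1

/-- Partial derivative with respect to the third coordinate. -/
noncomputable def pd3 (f : ℝ × ℝ × ℝ → ℝ) (p : ℝ × ℝ × ℝ) : ℝ :=
  deriv (fun t => f (p.1, p.2.1, t)) p.2.2

section
variable {ε : ℝ}

lemma pd1_scherk (hc : Real.cos ε ≠ 0) (p : ℝ × ℝ × ℝ) :
    pd1 (scherkF ε) p = Real.cos ε * Real.sinh (p.1 / Real.cos ε) := by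
  have h : HasDerivAt (fun t : ℝ => scherkF ε (t, p.2.1, p.2.2))
      (Real.cos ε * Real.sinh (p.1 / Real.cos ε)) p.1 := by
    have h1 : HasDerivAt (fun t : ℝ => t / Real.cos ε) (1 / Real.cos ε) p.1 := by
      simpa using (hasDerivAt_id p.1).div_const (Real.cos ε)
    have h2 := (h1.cosh.const_mul ((Real.cos ε) ^ 2)).sub_const
      ((Real.sin ε) ^ 2 * Real.cosh (p.2.2 / Real.sin ε))
    have h3 := h2.sub_const (Real.cos p.2.1)
    refine h3.congr_deriv ?_
    field_simp
  simpa [pd1] using h.deriv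

lemma pd2_scherk (p : ℝ × ℝ × ℝ) :
    pd2 (scherkF ε) p = Real.sin p.2.1 := by
  have h : HasDerivAt (fun t : ℝ => scherkF ε (p.1, t, p.2.2)) (Real.sin p.2.1) p.2.1 := by
    have h1 := ((Real.hasDerivAt_cos p.2.1).const_sub
      ((Real.cos ε) ^ 2 * Real.cosh (p.1 / Real.cos ε)
        - (Real.sin ε) ^ 2 * Real.cosh (p.2.2 / Real.sin ε)))
    refine h1.congr_deriv ?_
    simp
  simpa [pd2] using h.deriv

lemma pd3_scherk (hs : Real.sin ε ≠ 0) (p : ℝ × ℝ × ℝ) :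
    pd3 (scherkF ε) p = -(Real.sin ε * Real.sinh (p.2.2 / Real.sin ε)) := by
  have h : HasDerivAt (fun t : ℝ => scherkF ε (p.1, p.2.1, t))
      (-(Real.sin ε * Real.sinh (p.2.2 / Real.sin ε))) p.2.2 := by
    have h1 : HasDerivAt (fun t : ℝ => t / Real.sin ε) (1 / Real.sin ε) p.2.2 := by
      simpa using (hasDerivAt_id p.2.2).div_const (Real.sin ε)
    have h2 := ((h1.cosh.const_mul ((Real.sin ε) ^ 2)).const_sub
      ((Real.cos ε) ^ 2 * Real.cosh (p.1 / Real.cos ε))).sub_const (Real.cos p.2.1)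
    refine h2.congr_deriv ?_
    field_simp
  simpa [pd3] using h.deriv

lemma pd11 (hc : Real.cos ε ≠ 0) (p : ℝ × ℝ × ℝ) :
    pd1 (pd1 (scherkF ε)) p = Real.cosh (p.1 / Real.cos ε) := by
  have h : HasDerivAt (fun t : ℝ => Real.cos ε * Real.sinh (t / Real.cos ε))
      (Real.cosh (p.1 / Real.cos ε)) p.1 := by
    have h1 : HasDerivAt (fun t : ℝ => t / Real.cos ε) (1 / Real.cos ε) p.1 := by
      simpa using (hasDerivAt_id p.1).div_const (Real.cos ε)
    have h2 := h1.sinh.const_mul (Real.cos ε)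
    refine h2.congr_deriv ?_
    field_simp
  have he : (fun t : ℝ => pd1 (scherkF ε) (t, p.2.1, p.2.2))
      = fun t : ℝ => Real.cos ε * Real.sinh (t / Real.cos ε) :=
    funext fun t => pd1_scherk hc _
  rw [pd1, he, h.deriv]

lemma pd22 (p : ℝ × ℝ × ℝ) :
    pd2 (pd2 (scherkF ε)) p = Real.cos p.2.1 := by
  have he : (fun t : ℝ => pd2 (scherkF ε) (p.1, t, p.2.2)) = Real.sin :=
    funext fun t => pd2_scherk _
  rw [pd2, he, Real.deriv_sin]

lemma pd33 (hs : Real.sin ε ≠ 0) (p : ℝ × ℝ × ℝ) :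
    pd3 (pd3 (scherkF ε)) p = -Real.cosh (p.2.2 / Real.sin ε) := by
  have h : HasDerivAt (fun t : ℝ => -(Real.sin ε * Real.sinh (t / Real.sin ε)))
      (-Real.cosh (p.2.2 / Real.sin ε)) p.2.2 := by
    have h1 : HasDerivAt (fun t : ℝ => t / Real.sin ε) (1 / Real.sin ε) p.2.2 := by
      simpa using (hasDerivAt_id p.2.2).div_const (Real.sin ε)
    have h2 := (h1.sinh.const_mul (Real.sin ε)).neg
    refine h2.congr_deriv ?_
    field_simp
  have he : (fun t : ℝ => pd3 (scherkF ε) (p.1, p.2.1, t))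
      = fun t : ℝ => -(Real.sin ε * Real.sinh (t / Real.sin ε)) :=
    funext fun t => pd3_scherk hs _
  rw [pd3, he, h.deriv]

lemma pd21 (hc : Real.cos ε ≠ 0) (p : ℝ × ℝ × ℝ) : pd2 (pd1 (scherkF ε)) p = 0 := by
  have he : (fun t : ℝ => pd1 (scherkF ε) (p.1, t, p.2.2))
      = fun _ => Real.cos ε * Real.sinh (p.1 / Real.cos ε) :=
    funext fun t => pd1_scherk hc _
  rw [pd2, he, deriv_const]

lemma pd31 (hc : Real.cos ε ≠ 0) (p : ℝ × ℝ × ℝ) : pd3 (pd1 (scherkF ε)) p = 0 := by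
  have he : (fun t : ℝ => pd1 (scherkF ε) (p.1, p.2.1, t))
      = fun _ => Real.cos ε * Real.sinh (p.1 / Real.cos ε) :=
    funext fun t => pd1_scherk hc _
  rw [pd3, he, deriv_const]

lemma pd12 (p : ℝ × ℝ × ℝ) : pd1 (pd2 (scherkF ε)) p = 0 := by
  have he : (fun t : ℝ => pd2 (scherkF ε) (t, p.2.1, p.2.2))
      = fun _ => Real.sin p.2.1 := funext fun t => pd2_scherk _
  rw [pd1, he, deriv_const]

lemma pd32 (p : ℝ × ℝ × ℝ) : pd3 (pd2 (scherkF ε)) p = 0 := by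
  have he : (fun t : ℝ => pd2 (scherkF ε) (p.1, p.2.1, t))
      = fun _ => Real.sin p.2.1 := funext fun t => pd2_scherk _
  rw [pd3, he, deriv_const]

lemma pd13 (hs : Real.sin ε ≠ 0) (p : ℝ × ℝ × ℝ) : pd1 (pd3 (scherkF ε)) p = 0 := by
  have he : (fun t : ℝ => pd3 (scherkF ε) (t, p.2.1, p.2.2))
      = fun _ => -(Real.sin ε * Real.sinh (p.2.2 / Real.sin ε)) :=
    funext fun t => pd3_scherk hs _
  rw [pd1, he, deriv_const]

lemma pd23 (hs : Real.sin ε ≠ 0) (p : ℝ × ℝ × ℝ) : pd2 (pd3 (scherkF ε)) p = 0 := by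
  have he : (fun t : ℝ => pd3 (scherkF ε) (p.1, t, p.2.2))
      = fun _ => -(Real.sin ε * Real.sinh (p.2.2 / Real.sin ε)) :=
    funext fun t => pd3_scherk hs _
  rw [pd2, he, deriv_const]

end

/-- For every `ε ∈ (0, π/2)`, on the zero set of `F_ε` one has
`|∇F_ε|² ΔF_ε = ∇²F_ε(∇F_ε, ∇F_ε)`, i.e. `div(∇F_ε/|∇F_ε|) = 0` on `{F_ε = 0}`. -/
theorem scherk_stmt3 (ε : ℝ) (hε : ε ∈ Set.Ioo 0 (Real.pi / 2))
    (p : ℝ × ℝ × ℝ) (hp : scherkF ε p = 0) :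
    ((pd1 (scherkF ε) p) ^ 2 + (pd2 (scherkF ε) p) ^ 2 + (pd3 (scherkF ε) p) ^ 2) *
        (pd1 (pd1 (scherkF ε)) p + pd2 (pd2 (scherkF ε)) p + pd3 (pd3 (scherkF ε)) p)
      = pd1 (pd1 (scherkF ε)) p * pd1 (scherkF ε) p * pd1 (scherkF ε) p
        + pd2 (pd1 (scherkF ε)) p * pd1 (scherkF ε) p * pd2 (scherkF ε) p
        + pd3 (pd1 (scherkF ε)) p * pd1 (scherkF ε) p * pd3 (scherkF ε) p
        + pd1 (pd2 (scherkF ε)) p * pd2 (scherkF ε) p * pd1 (scherkF ε) p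
        + pd2 (pd2 (scherkF ε)) p * pd2 (scherkF ε) p * pd2 (scherkF ε) p
        + pd3 (pd2 (scherkF ε)) p * pd2 (scherkF ε) p * pd3 (scherkF ε) p
        + pd1 (pd3 (scherkF ε)) p * pd3 (scherkF ε) p * pd1 (scherkF ε) p
        + pd2 (pd3 (scherkF ε)) p * pd3 (scherkF ε) p * pd2 (scherkF ε) p
        + pd3 (pd3 (scherkF ε)) p * pd3 (scherkF ε) p * pd3 (scherkF ε) p := by
  have hc : Real.cos ε ≠ 0 :=
    ne_of_gt (Real.cos_pos_of_mem_Ioo ⟨by linarith [hε.1, Real.pi_pos], hε.2⟩)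
  have hs : Real.sin ε ≠ 0 :=
    ne_of_gt (Real.sin_pos_of_pos_of_lt_pi hε.1 (by linarith [hε.2, Real.pi_pos]))
  rw [pd1_scherk hc, pd2_scherk, pd3_scherk hs, pd11 hc, pd22, pd33 hs,
    pd12, pd13 hs, pd21 hc, pd23 hs, pd31 hc, pd32]
  set c := Real.cos ε with hcdef
  set s := Real.sin ε with hsdef
  set u := Real.cosh (p.1 / c) with hu
  set v := Real.cos p.2.1 with hv
  set w := Real.cosh (p.2.2 / s) with hw
  set S1 := Real.sinh (p.1 / c) with hS1
  set S2 := Real.sin p.2.1 with hS2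
  set S3 := Real.sinh (p.2.2 / s) with hS3
  have hcs : c ^ 2 + s ^ 2 = 1 := by
    rw [hcdef, hsdef, add_comm]; exact Real.sin_sq_add_cos_sq ε
  have h1 : S1 ^ 2 = u ^ 2 - 1 := by
    have := Real.cosh_sq (p.1 / c); rw [hS1, hu]; nlinarith [this]
  have h2 : S2 ^ 2 = 1 - v ^ 2 := by
    have := Real.sin_sq_add_cos_sq p.2.1; rw [hS2, hv]; nlinarith [this]
  have h3 : S3 ^ 2 = w ^ 2 - 1 := by
    have := Real.cosh_sq (p.2.2 / s); rw [hS3, hw]; nlinarith [this]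
  have hF : c ^ 2 * u - s ^ 2 * w - v = 0 := by
    rw [hu, hv, hw, hcdef, hsdef]; simpa [scherkF] using hp
  linear_combination ((v - w) * c ^ 2) * h1 + (u - w) * h2 + ((u + v) * s ^ 2) * h3
    + (s ^ 2 + c ^ 2 - v * w - u * w * s ^ 2 - u * w * c ^ 2 + u * v) * hF
    + (w + w * s ^ 2 - u - u * c ^ 2 - u * w ^ 2 * s ^ 2 + u ^ 2 * w * c ^ 2) * hcs
end

section
/- For n ≥ 3 and x₁ in a compact subset of ℝ² \ ({0} × 2πℤ), as ε → 0⁺ the function z_ε(x₁,x₂) = sin ε · acosh((tan ε)^{-2} cosh(x₁/cos ε) − (sin ε)^{-2} cos x₂) converges to 0; i.e., away from {0} × 2πℤ the Scherk surfaces S_ε converge to the plane z = 0 as ε → 0. -/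
/-- Inverse hyperbolic cosine. -/
noncomputable def arcosh (x : ℝ) : ℝ := Real.log (x + Real.sqrt (x ^ 2 - 1))

/-- The height function of the upper sheet of Scherk's surface `S_ε`. -/
noncomputable def scherkHeight (ε : ℝ) (p : ℝ × ℝ) : ℝ :=
  Real.sin ε *
    arcosh ((Real.tan ε ^ 2)⁻¹ * Real.cosh (p.1 / Real.cos ε)
      - (Real.sin ε ^ 2)⁻¹ * Real.cos p.2)

lemma arcosh_nonneg {x : ℝ} (hx : 1 ≤ x) : 0 ≤ arcosh x := by
  have h := Real.sqrt_nonneg (x ^ 2 - 1)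
  exact Real.log_nonneg (by linarith)


lemma arcosh_le_log {x : ℝ} (hx : 1 ≤ x) : arcosh x ≤ Real.log (2 * x) := by
  have h1 : Real.sqrt (x ^ 2 - 1) ≤ x := by
    calc Real.sqrt (x ^ 2 - 1) ≤ Real.sqrt (x ^ 2) :=
          Real.sqrt_le_sqrt (by linarith)
      _ = x := by rw [Real.sqrt_sq (by linarith)]
  have h0 := Real.sqrt_nonneg (x ^ 2 - 1)
  exact Real.log_le_log (by linarith) (by linarith)

/-- On any compact subset of `ℝ² \ ({0} × 2πℤ)`, the height
`z_ε = sin ε · acosh((tan ε)⁻² cosh(x₁/cos ε) − (sin ε)⁻² cos x₂)` of the Scherk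
surface converges to `0` as `ε → 0⁺`; i.e. away from `{0} × 2πℤ` the surfaces
`S_ε` converge to the hyperplane `z = 0`. -/
theorem scherk_stmt4 (K : Set (ℝ × ℝ)) (hK : IsCompact K)
    (hKaway : ∀ p ∈ K, ¬ (p.1 = 0 ∧ ∃ k : ℤ, p.2 = 2 * Real.pi * k)) :
    TendstoUniformlyOn (fun ε p => scherkHeight ε p) 0
      (nhdsWithin 0 (Set.Ioi (0 : ℝ))) K := by
  rcases K.eq_empty_or_nonempty with rfl | hne
  · exact tendstoUniformlyOn_empty
  -- a positive lower bound β for cosh x₁ - cos x₂ on K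
  have hgcont : ContinuousOn (fun p : ℝ × ℝ => Real.cosh p.1 - Real.cos p.2) K :=
    (Continuous.sub (Real.continuous_cosh.comp continuous_fst)
      (Real.continuous_cos.comp continuous_snd)).continuousOn
  obtain ⟨q, hqK, hqmin⟩ := hK.exists_isMinOn hne hgcont
  rw [isMinOn_iff] at hqmin
  set β : ℝ := Real.cosh q.1 - Real.cos q.2 with hβdef
  have hβ : 0 < β := by
    rcases lt_or_ge 0 β with h | h
    · exact h
    · exfalso
      have h1 : 1 ≤ Real.cosh q.1 := Real.one_le_cosh q.1
      have h2 : Real.cos q.2 ≤ 1 := Real.cos_le_one q.2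
      have hc1 : Real.cosh q.1 = 1 := by simp only [hβdef] at h; linarith
      have hc2 : Real.cos q.2 = 1 := by simp only [hβdef] at h; linarith
      have hq1 : q.1 = 0 := by
        by_contra hne0
        exact absurd hc1 (ne_of_gt (Real.one_lt_cosh.2 hne0))
      obtain ⟨n, hn⟩ := (Real.cos_eq_one_iff q.2).1 hc2
      exact hKaway q hqK ⟨hq1, ⟨n, by linarith [hn]⟩⟩
  -- a bound M for |x₁| on K
  obtain ⟨r, hrK, hrmax⟩ := hK.exists_isMaxOn hne
    ((continuous_abs.comp continuous_fst).continuousOn)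
  rw [isMaxOn_iff] at hrmax
  set M : ℝ := |r.1| with hMdef
  have hM0 : 0 ≤ M := abs_nonneg _
  set C : ℝ := Real.cosh (2 * M) + 1 with hCdef
  have hC2 : 2 ≤ C := by
    have := Real.one_le_cosh (2 * M); linarith
  rw [Metric.tendstoUniformlyOn_iff]
  intro δ hδ
  -- the auxiliary bounding function
  set φ : ℝ → ℝ := fun ε => Real.sin ε * Real.log (2 * C) + 4 * Real.sqrt (Real.sin ε)
    with hφdef
  have hφc : Continuous φ := by
    apply Continuous.add
    · exact Real.continuous_sin.mul continuous_const
    · exact continuous_const.mul (Real.continuous_sqrt.comp Real.continuous_sin)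
  have hφ0 : φ 0 = 0 := by simp [hφdef]
  have hφt : Filter.Tendsto φ (nhdsWithin 0 (Set.Ioi (0:ℝ))) (nhds 0) := by
    have := (hφc.tendsto 0).mono_left (nhdsWithin_le_nhds
      (s := Set.Ioi (0:ℝ)) (a := (0:ℝ)))
    rwa [hφ0] at this
  have ev1 : ∀ᶠ ε in nhdsWithin 0 (Set.Ioi (0:ℝ)), φ ε < δ :=
    hφt.eventually_lt_const hδ
  have ev2 : ∀ᶠ ε in nhdsWithin 0 (Set.Ioi (0:ℝ)), 0 < ε :=
    eventually_mem_nhdsWithin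
  have ev3 : ∀ᶠ ε in nhdsWithin 0 (Set.Ioi (0:ℝ)), ε < Real.pi / 3 :=
    (eventually_lt_nhds (by positivity)).filter_mono nhdsWithin_le_nhds
  have hψt : Filter.Tendsto (fun ε => (1 - Real.cos ε ^ 2) * Real.cosh M)
      (nhdsWithin 0 (Set.Ioi (0:ℝ))) (nhds 0) := by
    have hc : Continuous (fun ε => (1 - Real.cos ε ^ 2) * Real.cosh M) := by
      continuity
    have := (hc.tendsto 0).mono_left (nhdsWithin_le_nhds
      (s := Set.Ioi (0:ℝ)) (a := (0:ℝ)))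
    simpa using this
  have ev4 : ∀ᶠ ε in nhdsWithin 0 (Set.Ioi (0:ℝ)),
      (1 - Real.cos ε ^ 2) * Real.cosh M < β / 2 :=
    hψt.eventually_lt_const (by linarith)
  have hst : Filter.Tendsto (fun ε => Real.sin ε ^ 2)
      (nhdsWithin 0 (Set.Ioi (0:ℝ))) (nhds 0) := by
    have hc : Continuous (fun ε => Real.sin ε ^ 2) := by continuity
    have := (hc.tendsto 0).mono_left (nhdsWithin_le_nhds
      (s := Set.Ioi (0:ℝ)) (a := (0:ℝ)))
    simpa using this
  have ev5 : ∀ᶠ ε in nhdsWithin 0 (Set.Ioi (0:ℝ)), Real.sin ε ^ 2 < β / 2 :=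
    hst.eventually_lt_const (by linarith)
  filter_upwards [ev1, ev2, ev3, ev4, ev5] with ε hφδ hε0 hεπ hψ hs2
  intro p hp
  -- basic facts about sin ε, cos ε
  have hεπ' : ε < Real.pi := lt_trans hεπ (by
    have := Real.pi_pos; linarith)
  have hs : 0 < Real.sin ε := Real.sin_pos_of_pos_of_lt_pi hε0 hεπ'
  have hcgt : (1:ℝ)/2 < Real.cos ε := by
    have h := Real.cos_lt_cos_of_nonneg_of_le_pi (le_of_lt hε0)
      (by linarith [Real.pi_pos]) hεπ
    rwa [Real.cos_pi_div_three] at h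
  have hcpos : 0 < Real.cos ε := by linarith
  have hc1 : Real.cos ε ≤ 1 := Real.cos_le_one ε
  have hc2le : Real.cos ε ^ 2 ≤ 1 := by
    have h := mul_nonneg (by linarith : (0:ℝ) ≤ 1 - Real.cos ε)
      (by linarith : (0:ℝ) ≤ 1 + Real.cos ε)
    linarith [h, sq_nonneg (Real.cos ε)]
  set s : ℝ := Real.sin ε
  set c : ℝ := Real.cos ε
  have hsne : s ≠ 0 := ne_of_gt hs
  have hcne : c ≠ 0 := ne_of_gt hcpos
  have hs2pos : 0 < s ^ 2 := by positivity
  -- rewrite the argument of arcosh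
  set A : ℝ := (c ^ 2 * Real.cosh (p.1 / c) - Real.cos p.2) / s ^ 2 with hAdef
  have hargA : (Real.tan ε ^ 2)⁻¹ * Real.cosh (p.1 / c) - (s ^ 2)⁻¹ * Real.cos p.2
      = A := by
    rw [Real.tan_eq_sin_div_cos, hAdef]
    simp only [show Real.sin ε = s from rfl, show Real.cos ε = c from rfl]
    first
    | (field_simp; ring)
    | field_simp
  -- bounds on x₁ and the basic quantity B
  have hx₁ : |p.1| ≤ M := hrmax p hp
  have hβp : β ≤ Real.cosh p.1 - Real.cos p.2 := hqmin p hp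
  have hcosh1 : Real.cosh p.1 ≤ Real.cosh (p.1 / c) := by
    rw [Real.cosh_le_cosh]
    rw [abs_div, abs_of_pos hcpos]
    rw [le_div_iff₀ hcpos]
    exact mul_le_of_le_one_right (abs_nonneg p.1) hc1
  have hcosh2 : Real.cosh p.1 ≤ Real.cosh M := by
    rw [Real.cosh_le_cosh]; rwa [abs_of_nonneg hM0]
  have hcoshMpos : 0 < Real.cosh M := Real.cosh_pos M
  have hB1 : β / 2 ≤ c ^ 2 * Real.cosh (p.1 / c) - Real.cos p.2 := by
    have h1 : c ^ 2 * Real.cosh p.1 ≤ c ^ 2 * Real.cosh (p.1 / c) :=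
      mul_le_mul_of_nonneg_left hcosh1 (sq_nonneg c)
    have h2 : (1 - c ^ 2) * Real.cosh p.1 ≤ (1 - c ^ 2) * Real.cosh M :=
      mul_le_mul_of_nonneg_left hcosh2 (by linarith)
    have e1 : c ^ 2 * Real.cosh p.1 = Real.cosh p.1 - (1 - c ^ 2) * Real.cosh p.1 := by
      ring
    linarith
  have hcosh3 : Real.cosh (p.1 / c) ≤ Real.cosh (2 * M) := by
    rw [Real.cosh_le_cosh]
    rw [abs_div, abs_of_pos hcpos, abs_of_nonneg (by linarith : (0:ℝ) ≤ 2 * M)]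
    rw [div_le_iff₀ hcpos]
    have h8 : M * 1 ≤ (2 * M) * c := by
      have := mul_le_mul_of_nonneg_left hcgt.le (by linarith : (0:ℝ) ≤ 2 * M)
      linarith [this]
    linarith [h8, hx₁]
  have hB2 : c ^ 2 * Real.cosh (p.1 / c) - Real.cos p.2 ≤ C := by
    have h3 : c ^ 2 * Real.cosh (p.1 / c) ≤ Real.cosh (p.1 / c) := by
      have h9 := mul_le_of_le_one_left (Real.cosh_pos (p.1 / c)).le hc2le
      linarith [h9]
    have h4 : -Real.cos p.2 ≤ 1 := by linarith [Real.neg_one_le_cos p.2]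
    rw [hCdef]; linarith
  have hA1 : 1 < A := by
    rw [hAdef, lt_div_iff₀ hs2pos, one_mul]
    linarith
  have hA2 : A ≤ C / s ^ 2 := by
    rw [hAdef]
    gcongr
  -- bound arcosh A
  have harc0 : 0 ≤ arcosh A := arcosh_nonneg (le_of_lt hA1)
  have harc1 : arcosh A ≤ Real.log (2 * C) - 2 * Real.log s := by
    calc arcosh A ≤ Real.log (2 * A) := arcosh_le_log (le_of_lt hA1)
      _ ≤ Real.log (2 * (C / s ^ 2)) := Real.log_le_log (by linarith) (by linarith)
      _ = Real.log ((2 * C) / s ^ 2) := by ring_nf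
      _ = Real.log (2 * C) - Real.log (s ^ 2) :=
          Real.log_div (by positivity) (by positivity)
      _ = Real.log (2 * C) - 2 * Real.log s := by
          rw [Real.log_pow]; push_cast; ring
  -- the key estimate -2 log s ≤ 4 / √s
  have hsqrtpos : 0 < Real.sqrt s := Real.sqrt_pos.2 hs
  have hlogs : -Real.log s ≤ 2 / Real.sqrt s := by
    have h1 : Real.log s = 2 * Real.log (Real.sqrt s) := by
      rw [Real.log_sqrt (le_of_lt hs)]; ring
    have h2 : Real.log (Real.sqrt s)⁻¹ ≤ (Real.sqrt s)⁻¹ :=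
      Real.log_le_self (by positivity)
    rw [Real.log_inv] at h2
    rw [h1]
    rw [div_eq_mul_inv]
    linarith
  -- conclude
  have hheight : scherkHeight ε p = s * arcosh A := by
    rw [scherkHeight, hargA]
  have hub : scherkHeight ε p ≤ φ ε := by
    rw [hheight]
    have hφε : φ ε = s * Real.log (2 * C) + 4 * Real.sqrt s := rfl
    rw [hφε]
    have h5 : s * arcosh A ≤ s * (Real.log (2 * C) - 2 * Real.log s) :=
      mul_le_mul_of_nonneg_left harc1 (le_of_lt hs)
    have h6 : s * (-2 * Real.log s) ≤ s * (4 / Real.sqrt s) := by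
      apply mul_le_mul_of_nonneg_left _ (le_of_lt hs)
      have : 4 / Real.sqrt s = 2 * (2 / Real.sqrt s) := by ring
      rw [this]; linarith
    have h7 : s * (4 / Real.sqrt s) = 4 * Real.sqrt s := by
      rw [mul_div_assoc', mul_comm s 4, mul_div_assoc, Real.div_sqrt]
    linarith [h5, h6, h7]
  have hlb : 0 ≤ scherkHeight ε p := by
    rw [hheight]; exact mul_nonneg (le_of_lt hs) harc0
  have : dist ((fun _ : ℝ × ℝ => (0:ℝ)) p) (scherkHeight ε p) < δ := by
    rw [Real.dist_eq]
    rw [abs_sub_comm, sub_zero, abs_of_nonneg hlb]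
    linarith
  simpa using this
end

section
/- For n ≥ 3, the function u describing the upper end of the unit n-catenoid as a graph over the hyperplane z = 0 satisfies u(x) = c_∞ − (1/(n−2)) r^{2−n} + O(r^{4−3n}) as r = |x| → ∞. -/
open MeasureTheory

/-- The profile function `φ` of the unit `n`-catenoid: `φ(s)^{n-1} = cosh((n-1)s)`. -/
noncomputable def catPhi (n : ℕ) (s : ℝ) : ℝ :=
  Real.cosh (((n : ℝ) - 1) * s) ^ ((1 : ℝ) / ((n : ℝ) - 1))

/-- The height function `ψ(s) = ∫₀^s φ(t)^{2-n} dt` of the unit `n`-catenoid. -/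
noncomputable def catPsi (n : ℕ) (s : ℝ) : ℝ :=
  ∫ t in (0 : ℝ)..s, catPhi n t ^ ((2 : ℝ) - n)

/-- The asymptotic height `c_∞ = lim_{s→∞} ψ(s) = ∫₀^∞ φ^{2-n}`. -/
noncomputable def catCinf (n : ℕ) : ℝ :=
  ∫ t in Set.Ioi (0 : ℝ), catPhi n t ^ ((2 : ℝ) - n)

open Real Set Filter

lemma cosh_rpow_le {a c : ℝ} (hc : c ≤ 0) (t : ℝ) :
    Real.cosh (a*t) ^ c ≤ (2:ℝ) ^ (-c) * Real.exp (a*c*t) := by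
  have h1 : Real.exp (a*t) / 2 ≤ Real.cosh (a*t) := by
    rw [Real.cosh_eq]
    have := Real.exp_pos (-(a*t))
    linarith
  have h2 := Real.rpow_le_rpow_of_nonpos (by positivity) h1 hc
  calc Real.cosh (a*t) ^ c ≤ (Real.exp (a*t) / 2) ^ c := h2
    _ = (2:ℝ) ^ (-c) * Real.exp (a*c*t) := by
        rw [Real.div_rpow (Real.exp_pos _).le (by norm_num), ← Real.exp_mul,
          Real.rpow_neg (by norm_num)]
        rw [div_eq_inv_mul]
        ring_nf

lemma cosh_rpow_integrableOn {a c : ℝ} (ha : 0 < a) (hc : c < 0) (s : ℝ) :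
    IntegrableOn (fun t => Real.cosh (a*t) ^ c) (Set.Ioi s) := by
  have hmeas : AEStronglyMeasurable (fun t => Real.cosh (a*t) ^ c)
      (volume.restrict (Set.Ioi s)) := by
    apply Continuous.aestronglyMeasurable
    exact (Real.continuous_cosh.comp (continuous_const.mul continuous_id)).rpow_const
      (fun x => Or.inl (Real.cosh_pos _).ne')
  have hbound := (exp_neg_integrableOn_Ioi s (mul_pos ha (neg_pos.mpr hc))).const_mul
      ((2:ℝ)^(-c))
  refine Integrable.mono hbound hmeas ?_
  filter_upwards with t
  have h1 : (0:ℝ) < Real.cosh (a*t) ^ c := Real.rpow_pos_of_pos (Real.cosh_pos _) _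
  have h2 : (0:ℝ) < (2:ℝ) ^ (-c) * Real.exp (a*c*t) := by positivity
  rw [Real.norm_eq_abs, Real.norm_eq_abs, abs_of_pos h1]
  have := cosh_rpow_le hc.le t (a := a)
  calc Real.cosh (a*t) ^ c ≤ (2:ℝ)^(-c) * Real.exp (a*c*t) := this
    _ ≤ |(2:ℝ)^(-c) * Real.exp (-(a * -c) * t)| := by
        rw [abs_of_pos (by positivity)]
        apply le_of_eq; ring_nf

lemma integral_exp_neg_mul_Ioi {k : ℝ} (hk : 0 < k) (s : ℝ) :
    ∫ t in Set.Ioi s, Real.exp (-k * t) = Real.exp (-k * s) / k := by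
  have hderiv : ∀ x ∈ Set.Ici s, HasDerivAt (fun t => -Real.exp (-k * t) / k)
      (Real.exp (-k * x)) x := by
    intro x _
    have h1 : HasDerivAt (fun t : ℝ => -k * t) (-k) x := by
      simpa using (hasDerivAt_id x).const_mul (-k)
    have h2 := (h1.exp.neg).div_const k
    refine h2.congr_deriv ?_
    simp [hk.ne']
  have hint : IntegrableOn (fun t => Real.exp (-k * t)) (Set.Ioi s) :=
    exp_neg_integrableOn_Ioi s hk
  have htend : Tendsto (fun t => -Real.exp (-k * t) / k) atTop (nhds 0) := by
    have h0 : Tendsto (fun t : ℝ => Real.exp (-k * t)) atTop (nhds 0) := by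
      have hlin : Tendsto (fun t : ℝ => -k * t) atTop atBot := by
        simpa [neg_mul] using Filter.Tendsto.const_mul_atTop hk (tendsto_id (α := ℝ))
      exact Real.tendsto_exp_atBot.comp hlin
    simpa using (h0.neg).div_const k
  rw [integral_Ioi_of_hasDerivAt_of_tendsto' hderiv hint htend]
  field_simp
  ring

lemma catG_hasDerivAt {a p : ℝ} (ha : 0 < a) (hp : p < 0) (t : ℝ) :
    HasDerivAt (fun u => -((-1/(a*p)) * (Real.sinh (a*u) * Real.cosh (a*u) ^ (p-1))))
      (Real.cosh (a*t) ^ p - ((p-1)/p) * Real.cosh (a*t) ^ (p-2)) t := by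
  have h1 : HasDerivAt (fun u : ℝ => a*u) a t := by
    simpa using (hasDerivAt_id t).const_mul a
  have hs := h1.sinh
  have hc := h1.cosh
  have hr := hc.rpow_const (p := p-1) (Or.inl (Real.cosh_pos _).ne')
  have hm := ((hs.mul hr).const_mul (-1/(a*p))).neg
  refine hm.congr_deriv (Eq.symm ?_)
  set c := Real.cosh (a*t) with hcdef
  set s2 := Real.sinh (a*t) with hsdef
  have hc0 : 0 < c := Real.cosh_pos _
  have e1 : c ^ (p-1) = c ^ p / c := by
    rw [Real.rpow_sub hc0, Real.rpow_one]
  have e2 : c ^ (p-1-1) = c ^ p / (c*c) := by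
    rw [show p-1-1 = p-(2:ℕ) by push_cast; ring, Real.rpow_sub hc0, Real.rpow_natCast]
    ring_nf
  have e3 : c ^ (p-2) = c ^ p / (c*c) := by
    rw [show p-2 = p-(2:ℕ) by push_cast; ring, Real.rpow_sub hc0, Real.rpow_natCast]
    ring_nf
  have hsq : s2^2 = c^2 - 1 := Real.sinh_sq _
  have hcp : 0 < c ^ p := Real.rpow_pos_of_pos hc0 _
  rw [e1, e2, e3]
  have ha' : a ≠ 0 := ha.ne'
  have hp' : p ≠ 0 := hp.ne
  have hc' : c ≠ 0 := hc0.ne'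
  field_simp
  ring_nf
  linear_combination (1 - p) * hsq


lemma catenoid_tail {a p : ℝ} (ha : 0 < a) (hp : p < 0) (s : ℝ) :
    ∫ t in Set.Ioi s, Real.cosh (a*t) ^ p
      = (-1/(a*p)) * (Real.sinh (a*s) * Real.cosh (a*s) ^ (p-1))
        + ((p-1)/p) * ∫ t in Set.Ioi s, Real.cosh (a*t) ^ (p-2) := by
  have hap : a * p < 0 := mul_neg_of_pos_of_neg ha hp
  have hk : 0 < -1/(a*p) := by
    rw [div_pos_iff]; right; constructor <;> linarith
  have hp2 : p - 2 < 0 := by linarith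
  have hint1 : IntegrableOn (fun t => Real.cosh (a*t) ^ p) (Set.Ioi s) :=
    cosh_rpow_integrableOn ha hp s
  have hint2 : IntegrableOn (fun t => Real.cosh (a*t) ^ (p-2)) (Set.Ioi s) :=
    cosh_rpow_integrableOn ha hp2 s
  have hint : IntegrableOn
      (fun t => Real.cosh (a*t) ^ p - ((p-1)/p) * Real.cosh (a*t) ^ (p-2)) (Set.Ioi s) :=
    hint1.sub (hint2.const_mul _)
  -- tendsto of -G
  have htend : Tendsto (fun u => -((-1/(a*p)) * (Real.sinh (a*u) * Real.cosh (a*u) ^ (p-1))))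
      atTop (nhds 0) := by
    have hG : Tendsto (fun u => (-1/(a*p)) * (Real.sinh (a*u) * Real.cosh (a*u) ^ (p-1)))
        atTop (nhds 0) := by
      apply squeeze_zero'
      · filter_upwards [eventually_ge_atTop (0:ℝ)] with u hu
        have h1 : 0 ≤ Real.sinh (a*u) := Real.sinh_nonneg_iff.mpr (by positivity)
        have h2 : 0 < Real.cosh (a*u) ^ (p-1) := Real.rpow_pos_of_pos (Real.cosh_pos _) _
        positivity
      · filter_upwards with u
        have hc0 : 0 < Real.cosh (a*u) := Real.cosh_pos _
        have h3 : Real.sinh (a*u) * Real.cosh (a*u) ^ (p-1)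
            ≤ Real.cosh (a*u) ^ p := by
          rw [Real.rpow_sub hc0, Real.rpow_one]
          rw [div_eq_mul_inv, ← mul_assoc]
          calc Real.sinh (a*u) * Real.cosh (a*u) ^ p * (Real.cosh (a*u))⁻¹
              ≤ Real.cosh (a*u) * Real.cosh (a*u) ^ p * (Real.cosh (a*u))⁻¹ := by
                have := (Real.sinh_lt_cosh (a*u)).le
                have h4 : 0 < Real.cosh (a*u) ^ p := Real.rpow_pos_of_pos hc0 _
                gcongr
            _ = Real.cosh (a*u) ^ p := by field_simp
        calc (-1/(a*p)) * (Real.sinh (a*u) * Real.cosh (a*u) ^ (p-1))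
            ≤ (-1/(a*p)) * Real.cosh (a*u) ^ p := by gcongr
          _ ≤ (-1/(a*p)) * ((2:ℝ)^(-p) * Real.exp (a*p*u)) := by
              have := cosh_rpow_le hp.le (a := a) u
              gcongr
      · have hlin : Tendsto (fun u : ℝ => a*p*u) atTop atBot := by
          have : (0:ℝ) < -(a*p) := by linarith
          have h := Filter.Tendsto.const_mul_atTop this (tendsto_id (α := ℝ))
          simpa [neg_mul] using h
        have hexp : Tendsto (fun u : ℝ => Real.exp (a*p*u)) atTop (nhds 0) :=
          Real.tendsto_exp_atBot.comp hlin
        have := (hexp.const_mul ((2:ℝ)^(-p))).const_mul (-1/(a*p))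
        simpa using this
    simpa using hG.neg
  have hftc := integral_Ioi_of_hasDerivAt_of_tendsto'
    (fun x _ => catG_hasDerivAt ha hp x) hint htend
  rw [integral_sub hint1 (hint2.const_mul _), integral_const_mul] at hftc
  simp only [zero_sub, neg_neg] at hftc
  linarith

lemma catenoid_est {a p : ℝ} (ha : 0 < a) (hp : p < 0) {s : ℝ} (hs : 0 ≤ s) :
    |(∫ t in Set.Ioi s, Real.cosh (a*t) ^ p) - (-1/(a*p)) * Real.cosh (a*s) ^ p|
      ≤ (-1/(a*p) + ((p-1)/p) * ((2:ℝ)^((2:ℝ)-p) / (a*(2-p)))) * Real.cosh (a*s) ^ (p-2) := by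
  have hap : a * p < 0 := mul_neg_of_pos_of_neg ha hp
  have hk : 0 < -1/(a*p) := by rw [div_pos_iff]; right; constructor <;> linarith
  have hK : 0 < (p-1)/p := by rw [div_pos_iff]; right; constructor <;> linarith
  have hp2 : p - 2 < 0 := by linarith
  have h2p : 0 < a*(2-p) := by nlinarith
  have hc0 : 0 < Real.cosh (a*s) := Real.cosh_pos _
  have hint2 : IntegrableOn (fun t => Real.cosh (a*t) ^ (p-2)) (Set.Ioi s) :=
    cosh_rpow_integrableOn ha hp2 s
  set k := -1/(a*p) with hkdef
  set K := (p-1)/p with hKdef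
  set c := Real.cosh (a*s) with hcdef
  set s2 := Real.sinh (a*s) with hs2def
  set I := ∫ t in Set.Ioi s, Real.cosh (a*t) ^ (p-2) with hIdef
  have hI0 : 0 ≤ I := setIntegral_nonneg measurableSet_Ioi
    (fun t _ => (Real.rpow_pos_of_pos (Real.cosh_pos _) _).le)
  rw [catenoid_tail ha hp s, ← hs2def, ← hcdef, ← hIdef, ← hkdef, ← hKdef]
  -- rearrange
  have hre : k * (s2 * c ^ (p-1)) + K * I - k * c ^ p
      = (k * (s2 * c ^ (p-1)) - k * c ^ p) + K * I := by ring
  rw [hre]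
  have hce : c ≤ Real.exp (a*s) := by
    rw [hcdef, Real.cosh_eq]
    have h1 : Real.exp (-(a*s)) ≤ Real.exp (a*s) := by
      apply Real.exp_le_exp.mpr; nlinarith
    linarith
  -- main term bound
  have hA : k * (s2 * c ^ (p-1)) - k * c ^ p = -(k * (c ^ (p-1) * Real.exp (-(a*s)))) := by
    have hsc : s2 - c = -Real.exp (-(a*s)) := Real.sinh_sub_cosh _
    have e1 : c ^ p = c * c ^ (p-1) := by
      rw [Real.rpow_sub hc0, Real.rpow_one]; field_simp
    rw [e1]
    linear_combination (k * c ^ (p-1)) * hsc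
  have hAbound : |k * (s2 * c ^ (p-1)) - k * c ^ p| ≤ k * c ^ (p-2) := by
    rw [hA, abs_neg, abs_of_nonneg (by positivity)]
    have e2 : c ^ (p-2) = c ^ (p-1) / c := by
      rw [show p-2 = (p-1)-1 by ring, Real.rpow_sub hc0, Real.rpow_one]
    rw [e2]
    have h3 : Real.exp (-(a*s)) ≤ 1/c := by
      rw [Real.exp_neg]
      rw [one_div]
      exact inv_anti₀ hc0 hce
    calc k * (c ^ (p-1) * Real.exp (-(a*s)))
        ≤ k * (c ^ (p-1) * (1/c)) := by
          have : (0:ℝ) < c ^ (p-1) := Real.rpow_pos_of_pos hc0 _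
          gcongr
      _ = k * (c ^ (p-1) / c) := by ring
  -- tail integral bound
  have hIb : I ≤ (2:ℝ)^((2:ℝ)-p) * (Real.exp (-(a*(2-p)) * s) / (a*(2-p))) := by
    have hmono : I ≤ ∫ t in Set.Ioi s, (2:ℝ)^((2:ℝ)-p) * Real.exp (-(a*(2-p)) * t) := by
      apply setIntegral_mono_on hint2
        ((exp_neg_integrableOn_Ioi s h2p).const_mul _) measurableSet_Ioi
      intro t _
      have h4 := cosh_rpow_le (a := a) hp2.le t
      rw [show a*(p-2)*t = -(a*(2-p))*t by ring, show -(p-2) = (2:ℝ)-p by ring] at h4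
      exact h4
    rw [integral_const_mul, integral_exp_neg_mul_Ioi h2p] at hmono
    exact hmono
  have hexps : Real.exp (-(a*(2-p)) * s) ≤ c ^ (p-2) := by
    rw [show -(a*(2-p))*s = (a*s)*(p-2) by ring, Real.exp_mul]
    exact Real.rpow_le_rpow_of_nonpos hc0 hce hp2.le
  have hKI : K * I ≤ K * ((2:ℝ)^((2:ℝ)-p) / (a*(2-p))) * c ^ (p-2) := by
    calc K * I ≤ K * ((2:ℝ)^((2:ℝ)-p) * (Real.exp (-(a*(2-p)) * s) / (a*(2-p)))) := by gcongr
      _ ≤ K * ((2:ℝ)^((2:ℝ)-p) * (c ^ (p-2) / (a*(2-p)))) := by gcongr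
      _ = K * ((2:ℝ)^((2:ℝ)-p) / (a*(2-p))) * c ^ (p-2) := by ring
  calc |(k * (s2 * c ^ (p-1)) - k * c ^ p) + K * I|
      ≤ |k * (s2 * c ^ (p-1)) - k * c ^ p| + K * I := by
        refine (abs_add_le _ _).trans ?_
        exact add_le_add_right (le_of_eq (abs_of_nonneg (mul_nonneg hK.le hI0))) _
    _ ≤ k * c ^ (p-2) + K * ((2:ℝ)^((2:ℝ)-p) / (a*(2-p))) * c ^ (p-2) := by
        exact add_le_add hAbound hKI
    _ = (k + K * ((2:ℝ)^((2:ℝ)-p) / (a*(2-p)))) * c ^ (p-2) := by ring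


/-- the upper end of the unit `n`-catenoid, which is the graph of
`u = ψ ∘ s(r)` over the hyperplane `z = 0` with `r = φ(s)`, satisfies
`u = c_∞ − (1/(n−2)) r^{2−n} + O(r^{4−3n})` as `r → ∞`; equivalently,
`ψ(s) = c_∞ − (1/(n−2)) φ(s)^{2−n} + O(φ(s)^{4−3n})` as `s → ∞`. -/
theorem scherk_stmt5 (n : ℕ) (hn : 3 ≤ n) :
    ∃ C > (0 : ℝ), ∃ s₀ : ℝ, ∀ s ≥ s₀,
      |catPsi n s - (catCinf n - (1 / ((n : ℝ) - 2)) * catPhi n s ^ ((2 : ℝ) - n))|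
        ≤ C * catPhi n s ^ ((4 : ℝ) - 3 * n) := by
  have hn3 : (3:ℝ) ≤ (n:ℝ) := by exact_mod_cast hn
  have ha : 0 < (n:ℝ) - 1 := by linarith
  have hn2 : 0 < (n:ℝ) - 2 := by linarith
  set p : ℝ := ((2:ℝ) - n)/((n:ℝ)-1) with hpdef
  have hp : p < 0 := div_neg_of_neg_of_pos (by linarith) ha
  have hap : ((n:ℝ)-1) * p = 2 - n := by rw [hpdef]; field_simp
  have hk : -1/(((n:ℝ)-1)*p) = 1/((n:ℝ)-2) := by
    rw [hap, show (2:ℝ)-(n:ℝ) = -((n:ℝ)-2) by ring, div_neg, neg_div, neg_neg]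
  have hK : 0 < (p-1)/p := by rw [div_pos_iff]; right; constructor <;> linarith
  have hC : 0 < 1/((n:ℝ)-2) + ((p-1)/p) * ((2:ℝ)^((2:ℝ)-p) / (((n:ℝ)-1)*(2-p))) := by
    have h1 : 0 < (1:ℝ)/((n:ℝ)-2) := by positivity
    have h2 : 0 < ((2:ℝ)^((2:ℝ)-p) / (((n:ℝ)-1)*(2-p))) := by
      have : 0 < ((n:ℝ)-1)*(2-p) := by nlinarith
      positivity
    nlinarith
  refine ⟨_, hC, 0, fun s hs => ?_⟩
  have hphi : ∀ (t e : ℝ), catPhi n t ^ e = Real.cosh (((n:ℝ)-1)*t) ^ (e/((n:ℝ)-1)) := by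
    intro t e
    rw [catPhi, ← Real.rpow_mul (Real.cosh_pos _).le, one_div_mul_eq_div]
  have he1 : ((2:ℝ) - (n:ℝ))/((n:ℝ)-1) = p := hpdef.symm
  have he2 : ((4:ℝ) - 3*(n:ℝ))/((n:ℝ)-1) = p - 2 := by
    rw [hpdef]; field_simp; ring
  have hF : ∀ t : ℝ, catPhi n t ^ ((2:ℝ)-(n:ℝ)) = Real.cosh (((n:ℝ)-1)*t) ^ p := by
    intro t; rw [hphi t _, he1]
  have hpsi : catPsi n s = ∫ t in Set.Ioc (0:ℝ) s, Real.cosh (((n:ℝ)-1)*t) ^ p := by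
    rw [catPsi, intervalIntegral.integral_of_le hs]
    simp only [hF]
  have hcinf : catCinf n = ∫ t in Set.Ioi (0:ℝ), Real.cosh (((n:ℝ)-1)*t) ^ p := by
    rw [catCinf]; simp only [hF]
  have hsplit : catCinf n - catPsi n s = ∫ t in Set.Ioi s, Real.cosh (((n:ℝ)-1)*t) ^ p := by
    rw [hcinf, hpsi, ← Set.Ioc_union_Ioi_eq_Ioi hs,
      MeasureTheory.setIntegral_union (Set.Ioc_disjoint_Ioi le_rfl) measurableSet_Ioi
        ((cosh_rpow_integrableOn ha hp 0).mono_set Set.Ioc_subset_Ioi_self)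
        (cosh_rpow_integrableOn ha hp s)]
    ring
  have key := catenoid_est ha hp hs
  rw [hk, ← hsplit] at key
  rw [hphi s ((2:ℝ)-(n:ℝ)), he1, hphi s ((4:ℝ)-3*(n:ℝ)), he2]
  have hre : catPsi n s - (catCinf n - 1/((n:ℝ)-2) * Real.cosh (((n:ℝ)-1)*s) ^ p)
      = -((catCinf n - catPsi n s) - 1/((n:ℝ)-2) * Real.cosh (((n:ℝ)-1)*s) ^ p) := by ring
  rw [hre, abs_neg]
  exact key
end

section
/- For n ≥ 3, the function Ψ^{0,−}(s) = ∂_s(φ(s)^{(n-2)/2}) is a solution of the homogeneous equation L w = 0, where L = ∂_s² − ((n−2)/2)² + (n(3n−2)/4) φ^{2−2n}. -/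
/-- `Ψ^{0,−} = ∂_s(φ^{(n-2)/2})` is a Jacobi field: it solves
`L w = 0` where `L = ∂_s² − ((n−2)/2)² + (n(3n−2)/4) φ^{2−2n}`. -/
theorem scherk_stmt7 (n : ℕ) (hn : 3 ≤ n)
    (Ψ : ℝ → ℝ)
    (hΨ : ∀ s : ℝ, Ψ s = deriv (fun t => catPhi n t ^ (((n : ℝ) - 2) / 2)) s) :
    ∀ s : ℝ,
      deriv (deriv Ψ) s - (((n : ℝ) - 2) / 2) ^ 2 * Ψ s
        + ((n : ℝ) * (3 * (n : ℝ) - 2) / 4) * catPhi n s ^ ((2 : ℝ) - 2 * n) * Ψ s = 0 := by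
  intro s
  have hn3 : (3 : ℝ) ≤ (n : ℝ) := by exact_mod_cast hn
  set a : ℝ := (n : ℝ) - 1 with ha_def
  have ha : 0 < a := by rw [ha_def]; linarith
  set e : ℝ := ((n : ℝ) - 2) / (2 * a) with he_def
  have hae : 2 * (a * e) = (n : ℝ) - 2 := by
    rw [he_def]; field_simp
  have hC : ∀ t : ℝ, 0 < Real.cosh (a * t) := fun t => Real.cosh_pos (a * t)
  -- basic derivative building blocks
  have hcosh : ∀ t : ℝ, HasDerivAt (fun u => Real.cosh (a * u)) (a * Real.sinh (a * t)) t := by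
    intro t
    have hc : HasDerivAt (fun u : ℝ => a * u) a t := by
      simpa using (hasDerivAt_id t).const_mul a
    simpa [mul_comm] using hc.cosh
  have hsinh : ∀ t : ℝ, HasDerivAt (fun u => Real.sinh (a * u)) (a * Real.cosh (a * t)) t := by
    intro t
    have hc : HasDerivAt (fun u : ℝ => a * u) a t := by
      simpa using (hasDerivAt_id t).const_mul a
    simpa [mul_comm] using hc.sinh
  have hrpow : ∀ (r : ℝ) (t : ℝ), HasDerivAt (fun u => Real.cosh (a * u) ^ r)
      (r * Real.cosh (a * t) ^ (r - 1) * (a * Real.sinh (a * t))) t := by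
    intro r t
    exact (Real.hasDerivAt_rpow_const (Or.inl (hC t).ne')).comp t (hcosh t)
  -- the function whose derivative is Ψ
  have hfun : (fun t => catPhi n t ^ (((n : ℝ) - 2) / 2)) = fun t => Real.cosh (a * t) ^ e := by
    funext t
    have ha' : a ≠ 0 := ha.ne'
    rw [catPhi, ← ha_def, ← Real.rpow_mul (hC t).le]
    congr 1
    rw [he_def]
    field_simp
  have hderiv1 : ∀ t : ℝ, HasDerivAt (fun u => Real.cosh (a * u) ^ e)
      (e * a * (Real.sinh (a * t) * Real.cosh (a * t) ^ (e - 1))) t := by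
    intro t
    convert hrpow e t using 1
    ring
  have hΨeq : ∀ t : ℝ, Ψ t = e * a * (Real.sinh (a * t) * Real.cosh (a * t) ^ (e - 1)) := by
    intro t
    rw [hΨ t, hfun]
    exact (hderiv1 t).deriv
  have hΨfun : Ψ = fun t => e * a * (Real.sinh (a * t) * Real.cosh (a * t) ^ (e - 1)) :=
    funext hΨeq
  -- first derivative of Ψ
  have hderiv2 : ∀ t : ℝ, HasDerivAt Ψ
      (e * a * a * (Real.cosh (a * t) * Real.cosh (a * t) ^ (e - 1)
        + (e - 1) * (Real.sinh (a * t) * Real.sinh (a * t)) * Real.cosh (a * t) ^ (e - 2))) t := by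
    intro t
    rw [hΨfun]
    have h := ((hsinh t).mul (hrpow (e - 1) t)).const_mul (e * a)
    refine h.congr_deriv ?_
    ring_nf
  have hΨ' : deriv Ψ = fun t => e * a * a * (Real.cosh (a * t) * Real.cosh (a * t) ^ (e - 1)
      + (e - 1) * (Real.sinh (a * t) * Real.sinh (a * t)) * Real.cosh (a * t) ^ (e - 2)) :=
    funext fun t => (hderiv2 t).deriv
  -- second derivative of Ψ at s
  have hderiv3 : HasDerivAt (deriv Ψ)
      (e * a * a * a * (Real.sinh (a * s) * Real.cosh (a * s) ^ (e - 1)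
        + 3 * (e - 1) * Real.sinh (a * s) * Real.cosh (a * s) * Real.cosh (a * s) ^ (e - 2)
        + (e - 1) * (e - 2) * (Real.sinh (a * s) * Real.sinh (a * s) * Real.sinh (a * s))
            * Real.cosh (a * s) ^ (e - 3))) s := by
    rw [hΨ']
    have h1 := (hcosh s).mul (hrpow (e - 1) s)
    have h2 := (((hsinh s).mul (hsinh s)).const_mul (e - 1)).mul (hrpow (e - 2) s)
    have h := (h1.add h2).const_mul (e * a * a)
    rw [show e - 1 - 1 = e - 2 from by ring, show e - 2 - 1 = e - 3 from by ring] at h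
    refine h.congr_deriv ?_
    simp only [Pi.mul_apply]
    ring
  rw [hderiv3.deriv, hΨeq s]
  -- rewrite the rpow exponents in terms of C^(e-3)
  set C : ℝ := Real.cosh (a * s) with hC_def
  set S : ℝ := Real.sinh (a * s) with hS_def
  have hCpos : 0 < C := hC s
  have h1 : C ^ (e - 1) = C ^ (e - 3) * (C * C) := by
    rw [show e - 1 = (e - 3) + 2 by ring, Real.rpow_add hCpos,
      show (2 : ℝ) = ((2 : ℕ) : ℝ) by norm_num, Real.rpow_natCast]
    ring
  have h2 : C ^ (e - 2) = C ^ (e - 3) * C := by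
    rw [show e - 2 = (e - 3) + 1 by ring, Real.rpow_add hCpos, Real.rpow_one]
  -- the potential term
  have hI : catPhi n s ^ ((2 : ℝ) - 2 * n) * (C * C) = 1 := by
    rw [catPhi, ← ha_def, ← Real.rpow_mul (hC s).le, ← hC_def]
    have hexp : 1 / a * ((2 : ℝ) - 2 * n) = -2 := by
      have hne : (n : ℝ) - 1 ≠ 0 := by linarith
      rw [ha_def]; field_simp; ring
    rw [hexp, show (C * C : ℝ) = C ^ ((2 : ℕ) : ℝ) by rw [Real.rpow_natCast]; ring,
      ← Real.rpow_add hCpos]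
    norm_num
  have hS2 : S ^ 2 = C ^ 2 - 1 := by
    have := Real.cosh_sq' (a * s)
    rw [← hC_def, ← hS_def] at this
    linarith
  rw [h1, h2]
  set X : ℝ := C ^ (e - 3) with hX_def
  linear_combination
    ((n : ℝ) * (3 * (n : ℝ) - 2) / 4 * (e * a * S * X)) * hI
    + (a * a * (e - 1) * (e - 2) * (e * a * S * X)) * hS2
    + ((e * a * S * X) * ((a * e / 2 + ((n : ℝ) - 2) / 4) * (C * C)
        + (-(((n : ℝ) - 2) / 2) - (2 * (a * e) - ((n : ℝ) - 2)) / 4 + 3 * a / 2))) * hae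
    + ((e * a * S * X) * (3 * ((n : ℝ) - 2) / 2 - 2 * a - 2 * ((n : ℝ) - 1))) * ha_def
end

section
/- For n ≥ 3, the function w(s) = φ(s)^{-n/2} satisfies L₁ w = 0, where L₁ = ∂_s² − λ₁ − ((n−2)/2)² + (n(3n−2)/4) φ^{2−2n} and λ₁ = n−1 is the first nonzero eigenvalue of the Laplacian on S^{n-1}. -/
/-- `w = φ^{-n/2}` solves `L₁ w = 0` where
`L₁ = ∂_s² − λ₁ − ((n−2)/2)² + (n(3n−2)/4) φ^{2−2n}` and `λ₁ = n − 1` is the first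
nonzero eigenvalue of the Laplacian on `S^{n-1}`. -/
theorem scherk_stmt8 (n : ℕ) (hn : 3 ≤ n)
    (w : ℝ → ℝ) (hw : ∀ s : ℝ, w s = catPhi n s ^ (-(n : ℝ) / 2)) :
    ∀ s : ℝ,
      deriv (deriv w) s - ((n : ℝ) - 1) * w s - (((n : ℝ) - 2) / 2) ^ 2 * w s
        + ((n : ℝ) * (3 * (n : ℝ) - 2) / 4) * catPhi n s ^ ((2 : ℝ) - 2 * n) * w s = 0 := by
  have hn3 : (3 : ℝ) ≤ (n : ℝ) := by exact_mod_cast hn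
  have hb : (n : ℝ) - 1 ≠ 0 := by nlinarith
  set a : ℝ := (n : ℝ) - 1 with ha_def
  have ha : a ≠ 0 := hb
  set p : ℝ := -(n : ℝ) / (2 * a) with hp_def
  -- rewrite w as cosh power
  have hwf : w = fun t => Real.cosh (a * t) ^ p := by
    funext t
    rw [hw, catPhi, ← Real.rpow_mul (Real.cosh_pos _).le]
    congr 1
    rw [hp_def, ha_def]
    field_simp
  have hderiv : ∀ t : ℝ, HasDerivAt w
      (Real.sinh (a * t) * a * p * Real.cosh (a * t) ^ (p - 1)) t := by
    intro t
    rw [hwf]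
    have h1 : HasDerivAt (fun t : ℝ => a * t) a t := by
      simpa using (hasDerivAt_id t).const_mul a
    have h2 : HasDerivAt (fun t : ℝ => Real.cosh (a * t)) (Real.sinh (a * t) * a) t := h1.cosh
    have h3 := h2.rpow_const (p := p) (Or.inl (Real.cosh_pos _).ne')
    simpa [mul_assoc, mul_comm, mul_left_comm] using h3
  have hderiv1 : deriv w = fun t =>
      Real.sinh (a * t) * a * p * Real.cosh (a * t) ^ (p - 1) :=
    funext fun t => (hderiv t).deriv
  intro s
  have hc : (0 : ℝ) < Real.cosh (a * s) := Real.cosh_pos _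
  -- second derivative
  have h1 : HasDerivAt (fun t : ℝ => a * t) a s := by
    simpa using (hasDerivAt_id s).const_mul a
  have hsh : HasDerivAt (fun t : ℝ => Real.sinh (a * t) * a * p)
      (Real.cosh (a * s) * a * a * p) s := by
    simpa [mul_assoc, mul_comm, mul_left_comm] using (h1.sinh.mul_const a).mul_const p
  have hcp : HasDerivAt (fun t : ℝ => Real.cosh (a * t) ^ (p - 1))
      (Real.sinh (a * s) * a * (p - 1) * Real.cosh (a * s) ^ (p - 1 - 1)) s := by
    have := (h1.cosh).rpow_const (p := p - 1) (Or.inl hc.ne')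
    simpa [mul_assoc, mul_comm, mul_left_comm] using this
  have h2d : HasDerivAt (deriv w)
      (Real.cosh (a * s) * a * a * p * Real.cosh (a * s) ^ (p - 1)
        + Real.sinh (a * s) * a * p *
            (Real.sinh (a * s) * a * (p - 1) * Real.cosh (a * s) ^ (p - 1 - 1))) s := by
    rw [hderiv1]
    exact hsh.mul hcp
  rw [h2d.deriv]
  -- rewrite catPhi powers
  have hcat : catPhi n s ^ ((2 : ℝ) - 2 * n) = Real.cosh (a * s) ^ (-2 : ℝ) := by
    rw [catPhi, ← Real.rpow_mul (Real.cosh_pos _).le]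
    congr 1
    have hb' : (n:ℝ) - 1 ≠ 0 := hb
    field_simp
    ring
  rw [hcat, hw s]
  have hws : catPhi n s ^ (-(n : ℝ) / 2) = Real.cosh (a * s) ^ p := by
    rw [catPhi, ← Real.rpow_mul (Real.cosh_pos _).le]
    congr 1
    rw [hp_def, ha_def]
    field_simp
  rw [hws]
  set c : ℝ := Real.cosh (a * s) with hc_def
  set sh : ℝ := Real.sinh (a * s) with hsh_def
  have hc0 : c ≠ 0 := hc.ne'
  have hrw1 : c ^ (p - 1) = c ^ p / c := by
    rw [Real.rpow_sub hc, Real.rpow_one]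
  have hrw2 : c ^ (p - 1 - 1) = c ^ p / (c * c) := by
    have h : p - 1 - 1 = p - 2 := by ring
    rw [h, Real.rpow_sub hc, show (2 : ℝ) = ((2 : ℕ) : ℝ) by norm_num, Real.rpow_natCast]
    ring_nf
  have hrw3 : c ^ (-2 : ℝ) = 1 / (c * c) := by
    rw [show (-2 : ℝ) = -((2 : ℕ) : ℝ) by norm_num, Real.rpow_neg hc.le, Real.rpow_natCast]
    ring_nf
  rw [hrw1, hrw2, hrw3]
  have hsq : sh ^ 2 = c ^ 2 - 1 := by
    rw [hsh_def, hc_def, Real.sinh_sq]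
  have e2 : sh * a * p * (sh * a * (p - 1) * (c ^ p / (c * c)))
      = (c ^ 2 - 1) * (a * p) * (a * (p - 1)) * c ^ p / (c * c) := by
    rw [← hsq]; ring
  rw [e2, hp_def, ha_def]
  have hb' : (n:ℝ) - 1 ≠ 0 := hb
  field_simp
  ring
end

section
/- For n ≥ 3, the function w(s) = φ(s)^{(n-4)/2} (φ(s) φ'(s) + ψ(s) ψ'(s)) satisfies L₁ w = 0, where L₁ = ∂_s² − (n−1) − ((n−2)/2)² + (n(3n−2)/4) φ^{2−2n}. -/
private lemma aux_cosh_rpow (m p t : ℝ) :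
    HasDerivAt (fun u => Real.cosh (m * u) ^ p)
      (m * p * Real.cosh (m * t) ^ (p - 1) * Real.sinh (m * t)) t := by
  have h1 : HasDerivAt (fun u : ℝ => m * u) m t := by
    simpa using (hasDerivAt_id t).const_mul m
  have h2 : HasDerivAt (fun u => Real.cosh (m * u)) (Real.sinh (m * t) * m) t :=
    (Real.hasDerivAt_cosh (m * t)).comp t h1
  have h3 := h2.rpow_const (p := p) (Or.inl (ne_of_gt (Real.cosh_pos (m * t))))
  convert h3 using 1
  ring

private lemma aux_sinh (m t : ℝ) :
    HasDerivAt (fun u => Real.sinh (m * u)) (m * Real.cosh (m * t)) t := by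
  have h1 : HasDerivAt (fun u : ℝ => m * u) m t := by
    simpa using (hasDerivAt_id t).const_mul m
  have := (Real.hasDerivAt_sinh (m * t)).comp t h1
  rw [mul_comm m (Real.cosh (m * t))]
  exact this


/-- `w = φ^{(n-4)/2}(φ φ' + ψ ψ')` solves `L₁ w = 0` where
`L₁ = ∂_s² − (n−1) − ((n−2)/2)² + (n(3n−2)/4) φ^{2−2n}`. -/
theorem scherk_stmt9 (n : ℕ) (hn : 3 ≤ n)
    (w : ℝ → ℝ)
    (hw : ∀ s : ℝ, w s = catPhi n s ^ (((n : ℝ) - 4) / 2) *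
      (catPhi n s * deriv (catPhi n) s + catPsi n s * deriv (catPsi n) s)) :
    ∀ s : ℝ,
      deriv (deriv w) s - ((n : ℝ) - 1) * w s - (((n : ℝ) - 2) / 2) ^ 2 * w s
        + ((n : ℝ) * (3 * (n : ℝ) - 2) / 4) * catPhi n s ^ ((2 : ℝ) - 2 * n) * w s = 0 := by
  have hn3 : (3:ℝ) ≤ (n:ℝ) := by exact_mod_cast hn
  set m : ℝ := (n:ℝ) - 1 with hm_def
  have hm2 : (2:ℝ) ≤ m := by rw [hm_def]; linarith
  have hmpos : (0:ℝ) < m := by linarith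
  have hm0 : m ≠ 0 := ne_of_gt hmpos
  have hnm : (n:ℝ) = m + 1 := by rw [hm_def]; ring
  set a : ℝ := (1 - m) / (2*m) with ha_def
  set b : ℝ := -(m+1) / (2*m) with hb_def
  have hcc : ∀ t : ℝ, (0:ℝ) < Real.cosh (m*t) := fun t => Real.cosh_pos (m*t)
  have hphi_eq : catPhi n = fun u => Real.cosh (m*u) ^ ((1:ℝ)/m) := rfl
  -- rpow merge helpers
  have key : ∀ (t p q : ℝ), Real.cosh (m*t) ^ p * Real.cosh (m*t) ^ q
      = Real.cosh (m*t) ^ (p + q) := fun t p q => (Real.rpow_add (hcc t) p q).symm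
  have key2 : ∀ (t p q : ℝ), (Real.cosh (m*t) ^ p) ^ q = Real.cosh (m*t) ^ (p * q) :=
    fun t p q => (Real.rpow_mul (hcc t).le p q).symm
  -- derivative of catPhi
  have hphiD : ∀ t, HasDerivAt (catPhi n)
      (Real.cosh (m*t) ^ ((1:ℝ)/m - 1) * Real.sinh (m*t)) t := by
    intro t
    rw [hphi_eq]
    have := aux_cosh_rpow m ((1:ℝ)/m) t
    convert this using 1
    rw [show m * ((1:ℝ)/m) = 1 by field_simp]
    ring
  -- continuity and derivative of catPsi
  have hcont1 : Continuous (catPhi n) := by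
    rw [hphi_eq]
    exact (Real.continuous_cosh.comp (continuous_const.mul continuous_id)).rpow_const
      (fun x => Or.inl (ne_of_gt (hcc x)))
  have hcont2 : Continuous (fun t => catPhi n t ^ ((2:ℝ) - n)) :=
    hcont1.rpow_const (fun x => Or.inl (ne_of_gt (by
      rw [hphi_eq]; exact Real.rpow_pos_of_pos (hcc x) _)))
  have hpsiD : ∀ t, HasDerivAt (catPsi n) (catPhi n t ^ ((2:ℝ) - n)) t := by
    intro t
    exact (hcont2.integral_hasStrictDerivAt 0 t).hasDerivAt
  -- value of psi'
  have hpsi_val : ∀ t, catPhi n t ^ ((2:ℝ) - n) = Real.cosh (m*t) ^ (2*a) := by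
    intro t
    rw [hphi_eq]
    simp only []
    rw [key2]
    congr 1
    rw [ha_def, hnm]
    field_simp
    ring
  -- closed form of w
  have hw1 : w = fun t => Real.cosh (m*t) ^ a * Real.sinh (m*t)
      + catPsi n t * Real.cosh (m*t) ^ b := by
    funext t
    rw [hw t, (hphiD t).deriv, (hpsiD t).deriv, hpsi_val t]
    rw [hphi_eq]
    simp only []
    rw [key2, ← mul_assoc, key, mul_add, ← mul_assoc, key]
    rw [show Real.cosh (m*t) ^ ((1:ℝ)/m * (((n:ℝ)-4)/2)) * (catPsi n t * Real.cosh (m*t) ^ (2*a))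
        = catPsi n t * (Real.cosh (m*t) ^ ((1:ℝ)/m * (((n:ℝ)-4)/2)) * Real.cosh (m*t) ^ (2*a)) from by ring,
       key]
    congr 2
    · congr 1; rw [ha_def, hnm]; field_simp; ring
    · congr 1; rw [ha_def, hb_def, hnm]; field_simp; ring
  -- hyperbolic identity
  have hsq : ∀ t : ℝ, Real.sinh (m*t) * Real.sinh (m*t) = Real.cosh (m*t) * Real.cosh (m*t) - 1 := by
    intro t
    have h := Real.cosh_sq_sub_sinh_sq (m*t)
    nlinarith [h]
  have hma : m * a = (1 - m)/2 := by rw [ha_def]; field_simp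
  have hmb : m * b = -(m+1)/2 := by rw [hb_def]; field_simp
  have hma1 : m * (a+1) = (m+1)/2 := by rw [ha_def]; field_simp; ring
  have hma2 : m * (a-1) = (1-3*m)/2 := by rw [ha_def]; field_simp; ring
  have hmb1 : m * (b-1) = -(3*m+1)/2 := by rw [hb_def]; field_simp; ring
  -- first derivative of w
  have hW1 : ∀ t, HasDerivAt w
      ((m+1)/2 * Real.cosh (m*t) ^ (a+1) + (m+1)/2 * Real.cosh (m*t) ^ (a-1)
        - (m+1)/2 * (catPsi n t * Real.cosh (m*t) ^ (b-1) * Real.sinh (m*t))) t := by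
    intro t
    rw [hw1]
    have hne := (hcc t).ne'
    have h1 := (aux_cosh_rpow m a t).mul (aux_sinh m t)
    have h2 := (hpsiD t).mul (aux_cosh_rpow m b t)
    convert h1.add h2 using 1
    · rfl
    · rfl
    · rfl
    rw [hpsi_val t, key]
    rw [show 2*a + b = a - 1 from by rw [ha_def, hb_def]; field_simp; ring]
    have rA1 : Real.cosh (m*t) ^ (a+1)
        = Real.cosh (m*t) ^ (a-1) * (Real.cosh (m*t) * Real.cosh (m*t)) := by
      rw [show a+1 = a-1+1+1 from by ring, Real.rpow_add_one hne, Real.rpow_add_one hne,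
        mul_assoc]
    have rA0 : Real.cosh (m*t) ^ a = Real.cosh (m*t) ^ (a-1) * Real.cosh (m*t) := by
      have h1' := Real.rpow_add_one hne (a-1)
      rw [show a-1+1 = a from by ring] at h1'
      exact h1'
    rw [rA1, rA0]
    linear_combination ((m-1)/2 * Real.cosh (m*t) ^ (a-1)) * hsq t
      - (Real.cosh (m*t) ^ (a-1) * Real.sinh (m*t) * Real.sinh (m*t)) * hma
      - (catPsi n t * Real.cosh (m*t) ^ (b-1) * Real.sinh (m*t)) * hmb
  have hd1 : deriv w = fun t =>
      (m+1)/2 * Real.cosh (m*t) ^ (a+1) + (m+1)/2 * Real.cosh (m*t) ^ (a-1)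
        - (m+1)/2 * (catPsi n t * Real.cosh (m*t) ^ (b-1) * Real.sinh (m*t)) :=
    funext fun t => (hW1 t).deriv
  intro s
  have hne := (hcc s).ne'
  have hT1 := (aux_cosh_rpow m (a+1) s).const_mul ((m+1)/2)
  have hT2 := (aux_cosh_rpow m (a-1) s).const_mul ((m+1)/2)
  have hT3 := (((hpsiD s).mul (aux_cosh_rpow m (b-1) s)).mul (aux_sinh m s)).const_mul ((m+1)/2)
  have hW2 : HasDerivAt (fun t =>
      (m+1)/2 * Real.cosh (m*t) ^ (a+1) + (m+1)/2 * Real.cosh (m*t) ^ (a-1)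
        - (m+1)/2 * (catPsi n t * Real.cosh (m*t) ^ (b-1) * Real.sinh (m*t)))
      ((m+1)/2 * (m * (a+1) * Real.cosh (m*s) ^ (a+1-1) * Real.sinh (m*s))
        + (m+1)/2 * (m * (a-1) * Real.cosh (m*s) ^ (a-1-1) * Real.sinh (m*s))
        - (m+1)/2 * ((catPhi n s ^ ((2:ℝ)-(n:ℝ)) * Real.cosh (m*s) ^ (b-1)
            + catPsi n s * (m * (b-1) * Real.cosh (m*s) ^ (b-1-1) * Real.sinh (m*s))) * Real.sinh (m*s)
          + catPsi n s * Real.cosh (m*s) ^ (b-1) * (m * Real.cosh (m*s)))) s :=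
    (hT1.add hT2).sub hT3
  rw [hd1, hW2.deriv]
  simp only [hw1]
  rw [hpsi_val s]
  rw [show a+1-1 = a from by ring, show a-1-1 = a-2 from by ring,
      show b-1-1 = b-2 from by ring]
  have h22 : catPhi n s ^ ((2:ℝ) - 2*(n:ℝ)) = Real.cosh (m*s) ^ (-2:ℝ) := by
    rw [hphi_eq]
    simp only []
    rw [key2]
    congr 1
    rw [hnm]
    field_simp
    ring
  rw [h22]
  rw [key s (2*a) (b-1), show 2*a + (b-1) = a-2 from by rw [ha_def, hb_def]; field_simp; ring]
  have split : ∀ p : ℝ, Real.cosh (m*s) ^ (p+1+1)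
      = Real.cosh (m*s) ^ p * (Real.cosh (m*s) * Real.cosh (m*s)) := by
    intro p; rw [Real.rpow_add_one hne, Real.rpow_add_one hne, mul_assoc]
  have rA : Real.cosh (m*s) ^ a
      = Real.cosh (m*s) ^ (a-2) * (Real.cosh (m*s) * Real.cosh (m*s)) := by
    have h := split (a-2); rw [show a-2+1+1 = a from by ring] at h; exact h
  have rB : Real.cosh (m*s) ^ b
      = Real.cosh (m*s) ^ (b-2) * (Real.cosh (m*s) * Real.cosh (m*s)) := by
    have h := split (b-2); rw [show b-2+1+1 = b from by ring] at h; exact h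
  have rB1 : Real.cosh (m*s) ^ (b-1) = Real.cosh (m*s) ^ (b-2) * Real.cosh (m*s) := by
    have h := Real.rpow_add_one hne (b-2); rw [show b-2+1 = b-1 from by ring] at h; exact h
  rw [rA, rB, rB1]
  have hFA : Real.cosh (m*s) ^ (-2:ℝ) * (Real.cosh (m*s) * Real.cosh (m*s)) = 1 := by
    rw [show Real.cosh (m*s) * Real.cosh (m*s)
        = Real.cosh (m*s) ^ (1:ℝ) * Real.cosh (m*s) ^ (1:ℝ) from by rw [Real.rpow_one],
      key, key]
    norm_num
  rw [hnm]
  linear_combination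
    ((m+1)*(3*m+1)/4 * catPsi n s * Real.cosh (m*s) ^ (b-2)) * hsq s
    + ((m+1)*(3*m+1)/4 * (Real.cosh (m*s) ^ (a-2) * Real.sinh (m*s)
        + catPsi n s * Real.cosh (m*s) ^ (b-2))) * hFA
    + ((m+1)/2 * Real.cosh (m*s) ^ (a-2) * (Real.cosh (m*s) * Real.cosh (m*s)) * Real.sinh (m*s)) * hma1
    + ((m+1)/2 * Real.cosh (m*s) ^ (a-2) * Real.sinh (m*s)) * hma2
    - ((m+1)/2 * catPsi n s * Real.cosh (m*s) ^ (b-2) * Real.sinh (m*s) * Real.sinh (m*s)) * hmb1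
end

section
/- For n ≥ 3, define coordinates (x̃₁, x̃₂, z̃) = (1/(2 sin ε))(x₁, x₂, z) on Scherk's surface F_ε = 0. Then along the rescaled surfaces, x̃₁² + x̃₂² = cosh²(z̃) + O(ε²) uniformly on compact sets; i.e., for every compact K ⊂ ℝ³ there is C > 0 such that all points of ε^{-1}·{F_ε = 0} ∩ K (coordinates (x̃₁,x̃₂,z̃) with |x̃ᵢ|, |z̃| ≤ R) satisfy |x̃₁² + x̃₂² − cosh² z̃| ≤ C ε². -/
lemma sinh_le_mul_cosh {x : ℝ} (hx : 0 ≤ x) : Real.sinh x ≤ x * Real.cosh x := by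
  set g : ℝ → ℝ := fun y => y * Real.cosh y - Real.sinh y with hg
  have hderiv : ∀ y : ℝ, HasDerivAt g (y * Real.sinh y) y := by
    intro y
    have h1 : HasDerivAt (fun y : ℝ => y * Real.cosh y)
        (1 * Real.cosh y + y * Real.sinh y) y :=
      (hasDerivAt_id y).mul (Real.hasDerivAt_cosh y)
    have := h1.sub (Real.hasDerivAt_sinh y)
    exact this.congr_deriv (by ring)
  have hmono : MonotoneOn g (Set.Ici 0) := by
    apply monotoneOn_of_deriv_nonneg (convex_Ici 0)
    · exact fun y _ => ((hderiv y).continuousAt).continuousWithinAt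
    · exact fun y _ => ((hderiv y).differentiableAt).differentiableWithinAt
    · intro y hy
      rw [(hderiv y).deriv]
      rw [interior_Ici] at hy
      exact mul_nonneg hy.le (Real.sinh_nonneg_iff.2 hy.le)
  have := hmono Set.self_mem_Ici (Set.mem_Ici.2 hx) hx
  simpa [hg] using this

lemma cosh_le_of_le_one {x : ℝ} (hx : 0 ≤ x) (hx1 : x ≤ 1) :
    Real.cosh x ≤ 1 + 6 * x ^ 2 := by
  have h2 : Real.cosh x = 2 * Real.sinh (x / 2) ^ 2 + 1 := by
    have := Real.cosh_two_mul (x / 2)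
    have hc := Real.cosh_sq (x / 2)
    rw [show 2 * (x / 2) = x by ring] at this
    rw [this, hc]; ring
  have hs : Real.sinh (x / 2) ≤ (x / 2) * Real.cosh (x / 2) :=
    sinh_le_mul_cosh (by linarith)
  have hs0 : 0 ≤ Real.sinh (x / 2) := Real.sinh_nonneg_iff.2 (by linarith)
  have hc1 : Real.cosh (x / 2) ≤ Real.cosh 1 := by
    rw [Real.cosh_le_cosh]
    rw [abs_of_nonneg (by linarith : (0:ℝ) ≤ x / 2), abs_one]
    linarith
  have hce : Real.cosh 1 ≤ 3 := by
    rw [Real.cosh_eq]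
    have h1 : Real.exp 1 ≤ 3 := by
      have := Real.exp_one_lt_d9
      linarith
    have h2 : Real.exp (-1) ≤ 1 := by
      rw [Real.exp_le_one_iff]; norm_num
    linarith
  have : Real.sinh (x / 2) ^ 2 ≤ ((x / 2) * 3) ^ 2 := by
    apply sq_le_sq'
    · nlinarith
    · calc Real.sinh (x/2) ≤ (x/2) * Real.cosh (x/2) := hs
        _ ≤ (x/2) * 3 := by nlinarith [Real.cosh_pos (x := x/2)]
  nlinarith

lemma sinh_sub_self_le {x : ℝ} (hx : 0 ≤ x) (hx1 : x ≤ 1) :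
    Real.sinh x - x ≤ 2 * x ^ 3 := by
  set g : ℝ → ℝ := fun y => 2 * y ^ 3 + y - Real.sinh y with hg
  have hderiv : ∀ y : ℝ, HasDerivAt g (6 * y ^ 2 + 1 - Real.cosh y) y := by
    intro y
    have h1 : HasDerivAt (fun y : ℝ => 2 * y ^ 3 + y)
        (2 * (3 * y ^ 2) + 1) y := by
      have := ((hasDerivAt_pow 3 y).const_mul 2).add (hasDerivAt_id y)
      exact this.congr_deriv (by norm_num)
    have := h1.sub (Real.hasDerivAt_sinh y)
    exact this.congr_deriv (by ring)
  have hmono : MonotoneOn g (Set.Icc 0 1) := by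
    apply monotoneOn_of_deriv_nonneg (convex_Icc 0 1)
    · exact fun y _ => ((hderiv y).continuousAt).continuousWithinAt
    · exact fun y _ => ((hderiv y).differentiableAt).differentiableWithinAt
    · intro y hy
      rw [(hderiv y).deriv]
      rw [interior_Icc] at hy
      have := cosh_le_of_le_one hy.1.le hy.2.le
      nlinarith
  have := hmono (Set.mem_Icc.2 ⟨le_refl 0, zero_le_one⟩) (Set.mem_Icc.2 ⟨hx, hx1⟩) hx
  simp only [hg, Real.sinh_zero] at this
  linarith

open Real in
lemma sinh_sq_bounds {u : ℝ} (hu : |u| ≤ 1) :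
    0 ≤ Real.sinh u ^ 2 - u ^ 2 ∧ Real.sinh u ^ 2 - u ^ 2 ≤ 8 * u ^ 4 := by
  have habs : Real.sinh u ^ 2 = Real.sinh |u| ^ 2 := by
    rcases abs_cases u with ⟨h, _⟩ | ⟨h, _⟩ <;> rw [h] <;> simp [Real.sinh_neg]
  have hw0 : 0 ≤ |u| := abs_nonneg u
  have h1 : |u| ≤ Real.sinh |u| := Real.self_le_sinh_iff.2 hw0
  have h2 : Real.sinh |u| ≤ |u| * Real.cosh |u| := sinh_le_mul_cosh hw0
  have hc1 : Real.cosh |u| ≤ Real.cosh 1 := by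
    rw [Real.cosh_le_cosh, abs_abs, abs_one]; exact hu
  have hce : Real.cosh 1 ≤ 3 := by
    rw [Real.cosh_eq]
    have := Real.exp_one_lt_d9
    have h2' : Real.exp (-1) ≤ 1 := by rw [Real.exp_le_one_iff]; norm_num
    linarith
  have h3 : Real.sinh |u| - |u| ≤ 2 * |u| ^ 3 := sinh_sub_self_le hw0 hu
  have hsu : Real.sinh |u| ≤ 3 * |u| := by nlinarith
  have hu2 : u ^ 2 = |u| ^ 2 := (sq_abs u).symm
  have hu4 : u ^ 4 = |u| ^ 4 := by rw [show (4:ℕ) = 2*2 from rfl, pow_mul, pow_mul, ← hu2]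
  constructor
  · rw [habs, hu2]; nlinarith
  · rw [habs, hu2]
    rw [hu4]
    nlinarith [mul_le_mul h3 (by nlinarith : Real.sinh |u| + |u| ≤ 4 * |u|)
      (by nlinarith : (0:ℝ) ≤ Real.sinh |u| + |u|) (by positivity : (0:ℝ) ≤ 2 * |u|^3)]

open Real in
lemma sin_sq_bounds {v : ℝ} (hv : |v| ≤ 1) :
    0 ≤ v ^ 2 - Real.sin v ^ 2 ∧ v ^ 2 - Real.sin v ^ 2 ≤ v ^ 4 := by
  have habs : Real.sin v ^ 2 = Real.sin |v| ^ 2 := by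
    rcases abs_cases v with ⟨h, _⟩ | ⟨h, _⟩ <;> rw [h] <;> simp [Real.sin_neg]
  have hw0 : 0 ≤ |v| := abs_nonneg v
  have h1 : Real.sin |v| ≤ |v| := Real.sin_le hw0
  have h2 : |v| - Real.sin |v| ≤ |v| ^ 3 / 4 := by
    rcases eq_or_lt_of_le hw0 with h | h
    · rw [← h]; simp
    · linarith [Real.sin_gt_sub_cube h, pow_nonneg hw0 3]
  have h3 : 0 ≤ Real.sin |v| ∨ True := Or.inr trivial
  have hsn : -|v| ≤ Real.sin |v| := by
    have := Real.neg_one_le_sin |v|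
    nlinarith [Real.abs_sin_le_abs (x := |v|), abs_abs v, neg_abs_le (Real.sin |v|),
      le_abs_self (Real.sin |v|)]
  have hv2 : v ^ 2 = |v| ^ 2 := (sq_abs v).symm
  have hv4 : v ^ 4 = |v| ^ 4 := by rw [show (4:ℕ) = 2*2 from rfl, pow_mul, pow_mul, ← hv2]
  constructor
  · rw [habs, hv2]; nlinarith
  · rw [habs, hv2, hv4]
    nlinarith [mul_le_mul h2 (by nlinarith : Real.sin |v| + |v| ≤ 2 * |v|)
      (by nlinarith : (0:ℝ) ≤ Real.sin |v| + |v|) (by positivity : (0:ℝ) ≤ |v|^3/4)]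

set_option maxHeartbeats 1600000 in
open Real in
/-- in rescaled coordinates `(x̃₁, x̃₂, z̃) = (x₁, x₂, z)/(2 sin ε)`,
the Scherk surfaces satisfy `x̃₁² + x̃₂² = cosh² z̃ + O(ε²)` uniformly on compact
sets: for every compact `K ⊂ ℝ³` there is `C > 0` such that every point of `K`
whose rescaling lies on `{F_ε = 0}` satisfies `|x̃₁² + x̃₂² − cosh² z̃| ≤ C ε²`. -/
theorem scherk_stmt18 (K : Set (ℝ × ℝ × ℝ)) (hK : IsCompact K) :
    ∃ C > (0 : ℝ), ∀ ε ∈ Set.Ioo (0 : ℝ) (Real.pi / 2), ∀ p ∈ K,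
      scherkF ε (2 * Real.sin ε * p.1, 2 * Real.sin ε * p.2.1,
        2 * Real.sin ε * p.2.2) = 0 →
      |p.1 ^ 2 + p.2.1 ^ 2 - Real.cosh p.2.2 ^ 2| ≤ C * ε ^ 2 := by
  obtain ⟨R₀, hR₀⟩ := hK.isBounded.exists_norm_le
  obtain ⟨R, hR1, hbound⟩ :
      ∃ R : ℝ, 1 ≤ R ∧ ∀ p ∈ K, |p.1| ≤ R ∧ |p.2.1| ≤ R ∧ |p.2.2| ≤ R := by
    refine ⟨max R₀ 1, le_max_right _ _, ?_⟩
    intro p hp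
    have h := (hR₀ p hp).trans (le_max_left R₀ 1)
    refine ⟨?_, ?_, ?_⟩
    · calc |p.1| = ‖p.1‖ := (Real.norm_eq_abs _).symm
        _ ≤ ‖p‖ := norm_fst_le p
        _ ≤ max R₀ 1 := h
    · calc |p.2.1| = ‖p.2.1‖ := (Real.norm_eq_abs _).symm
        _ ≤ ‖p.2‖ := norm_fst_le p.2
        _ ≤ ‖p‖ := norm_snd_le p
        _ ≤ max R₀ 1 := h
    · calc |p.2.2| = ‖p.2.2‖ := (Real.norm_eq_abs _).symm
        _ ≤ ‖p.2‖ := norm_snd_le p.2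
        _ ≤ ‖p‖ := norm_snd_le p
        _ ≤ max R₀ 1 := h
  have hR0 : (0:ℝ) < R := lt_of_lt_of_le one_pos hR1
  have hπ := Real.pi_pos
  obtain ⟨ε₀, hε₀pos, hε₀a, hε₀b⟩ :
      ∃ e : ℝ, 0 < e ∧ e ≤ π/4 ∧ e ≤ 1/(2*R) :=
    ⟨min (π/4) (1/(2*R)), lt_min (by positivity) (by positivity),
      min_le_left _ _, min_le_right _ _⟩
  obtain ⟨M, hM0, hMc, hMR⟩ :
      ∃ M : ℝ, 0 ≤ M ∧ Real.cosh R ^ 2 ≤ M ∧ 2 * R^2 ≤ M :=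
    ⟨2*R^2 + Real.cosh R ^ 2, by positivity, by nlinarith [sq_nonneg R], by nlinarith [sq_nonneg (Real.cosh R)]⟩
  refine ⟨33 * R^4 + M/ε₀^2 + 1, by positivity, ?_⟩
  rintro ε ⟨hε0, hεπ⟩ p hp hF
  obtain ⟨ha, hb, hz⟩ := hbound p hp
  set a := p.1 with hadef
  set b := p.2.1 with hbdef
  set z := p.2.2 with hzdef
  have ha2 : a^2 ≤ R^2 := sq_le_sq' (by linarith [(abs_le.1 ha).1]) (abs_le.1 ha).2
  have hb2 : b^2 ≤ R^2 := sq_le_sq' (by linarith [(abs_le.1 hb).1]) (abs_le.1 hb).2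
  rcases le_or_gt ε₀ ε with hcase | hcase
  · -- ε bounded below: crude bound
    clear hF hR₀ hbound hp hK
    have hcz : Real.cosh z ≤ Real.cosh R := by
      rw [Real.cosh_le_cosh, abs_of_pos hR0]; exact hz
    have hcz2 : Real.cosh z ^2 ≤ Real.cosh R ^2 := by
      nlinarith [Real.cosh_pos z, Real.cosh_pos R]
    have habs : |a^2 + b^2 - Real.cosh z^2| ≤ M := by
      rw [abs_le]
      constructor
      · nlinarith [sq_nonneg a, sq_nonneg b]
      · nlinarith [sq_nonneg (Real.cosh z)]
    have h1 : M ≤ M/ε₀^2 * ε^2 := by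
      have hεsq : ε₀^2 ≤ ε^2 := pow_le_pow_left₀ hε₀pos.le hcase 2
      rw [div_mul_eq_mul_div, le_div_iff₀ (by positivity)]
      exact mul_le_mul_of_nonneg_left hεsq hM0
    have h2 : M/ε₀^2 * ε^2 ≤ (33 * R^4 + M/ε₀^2 + 1) * ε^2 := by
      apply mul_le_mul_of_nonneg_right _ (sq_nonneg ε)
      have h4 : (0:ℝ) < R^4 := by positivity
      linarith
    linarith
  · -- ε small: Taylor expansion regime
    have hεπ4 : ε < π/4 := lt_of_lt_of_le hcase hε₀a
    have hεR : ε ≤ 1/(2*R) := le_trans hcase.le hε₀b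
    have hs0 : 0 < Real.sin ε := Real.sin_pos_of_pos_of_lt_pi hε0 (by linarith)
    have hsε : Real.sin ε ≤ ε := Real.sin_le hε0.le
    have hc : (1:ℝ)/2 ≤ Real.cos ε := by
      have h1 : Real.cos (π/4) ≤ Real.cos ε :=
        Real.cos_le_cos_of_nonneg_of_le_pi hε0.le (by linarith) hεπ4.le
      rw [Real.cos_pi_div_four] at h1
      have h2 : (1:ℝ) ≤ Real.sqrt 2 := by
        rw [show (1:ℝ) = Real.sqrt 1 by simp]
        exact Real.sqrt_le_sqrt (by norm_num)
      linarith
    have hc0 : 0 < Real.cos ε := by linarith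
    set s := Real.sin ε with hsdef
    set c := Real.cos ε with hcdef
    set t := s / c with htdef
    set u := t * a with hudef
    set v := s * b with hvdef
    have ht0 : 0 < t := div_pos hs0 hc0
    have ht2 : t ≤ 2 * ε := by
      rw [htdef, div_le_iff₀ hc0]
      have := mul_le_mul_of_nonneg_left hc (by positivity : (0:ℝ) ≤ 2 * ε)
      linarith
    have htR : t * R ≤ 1 := by
      calc t * R ≤ (2 * ε) * R := mul_le_mul_of_nonneg_right ht2 hR0.le
        _ ≤ (2 * (1/(2*R))) * R := by
            have := mul_le_mul_of_nonneg_right (by linarith : 2 * ε ≤ 2 * (1/(2*R))) hR0.le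
            linarith
        _ = 1 := by field_simp
    have hF' : c^2 * Real.cosh (2*u) - s^2 * Real.cosh (2*z) - Real.cos (2*v) = 0 := by
      simp only [scherkF] at hF
      have e1 : 2 * s * a / c = 2 * u := by rw [hudef, htdef]; ring
      have e2 : 2 * s * z / s = 2 * z := by
        rw [mul_comm 2 s, mul_assoc, mul_comm s (2*z), mul_div_assoc, div_self hs0.ne', mul_one]
      have e3 : 2 * s * b = 2 * v := by rw [hvdef]; ring
      rwa [e1, e2, e3] at hF
    clear hF hR₀ hbound hp hK
    have hkey : c^2 * Real.sinh u ^2 + Real.sin v ^2 = s^2 * Real.cosh z ^2 := by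
      rw [Real.cosh_two_mul, Real.cosh_two_mul, Real.cos_two_mul] at hF'
      have h2 := Real.cosh_sq u
      have h4 := Real.cosh_sq z
      have h6 := Real.sin_sq_add_cos_sq v
      have h7 := Real.sin_sq_add_cos_sq ε
      rw [← hsdef, ← hcdef] at h7
      linear_combination hF'/2 - (c^2/2) * h2 - (s^2/2) * h4 + h6 - h7/2
    have hs2 : (0:ℝ) < s^2 := by positivity
    have hcosh2 : Real.cosh z ^2 = (c^2 * Real.sinh u ^2 + Real.sin v ^2) / s^2 := by
      rw [eq_div_iff (ne_of_gt hs2)]; linear_combination -hkey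
    have hu1 : |u| ≤ 1 := by
      rw [hudef, abs_mul, abs_of_pos ht0]
      calc t * |a| ≤ t * R := mul_le_mul_of_nonneg_left ha ht0.le
        _ ≤ 1 := htR
    have hv1 : |v| ≤ 1 := by
      rw [hvdef, abs_mul, abs_of_pos hs0]
      calc s * |b| ≤ s * R := mul_le_mul_of_nonneg_left hb hs0.le
        _ ≤ ε * R := mul_le_mul_of_nonneg_right hsε hR0.le
        _ ≤ (1/(2*R)) * R := mul_le_mul_of_nonneg_right hεR hR0.le
        _ ≤ 1 := by rw [div_mul_eq_mul_div, div_le_one (by positivity)]; linarith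
    obtain ⟨hsl, hsu⟩ := sinh_sq_bounds hu1
    obtain ⟨hvl, hvu⟩ := sin_sq_bounds hv1
    -- term 1
    have e1 : c^2 * Real.sinh u ^2 / s^2 - a^2 = (Real.sinh u ^2 - u^2) * (c^2/s^2) := by
      rw [hudef, htdef]; field_simp
    have e1' : u^4 * (c^2/s^2) = t^2 * a^4 := by
      rw [hudef, htdef]; field_simp
    have hcs0 : (0:ℝ) < c^2/s^2 := by positivity
    have ha4 : a^4 ≤ R^4 := by
      calc a^4 = (a^2)^2 := by ring
        _ ≤ (R^2)^2 := pow_le_pow_left₀ (sq_nonneg a) ha2 2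
        _ = R^4 := by ring
    have hb4 : b^4 ≤ R^4 := by
      calc b^4 = (b^2)^2 := by ring
        _ ≤ (R^2)^2 := pow_le_pow_left₀ (sq_nonneg b) hb2 2
        _ = R^4 := by ring
    have ht4 : t^2 ≤ 4 * ε^2 := by
      calc t^2 ≤ (2*ε)^2 := pow_le_pow_left₀ ht0.le ht2 2
        _ = 4 * ε^2 := by ring
    have ht1 : |a^2 - c^2 * Real.sinh u ^2 / s^2| ≤ 32 * R^4 * ε^2 := by
      rw [abs_sub_comm, abs_of_nonneg (by rw [e1]; exact mul_nonneg hsl hcs0.le), e1]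
      calc (Real.sinh u ^2 - u^2) * (c^2/s^2)
          ≤ 8 * u^4 * (c^2/s^2) := mul_le_mul_of_nonneg_right hsu hcs0.le
        _ = 8 * (t^2 * a^4) := by rw [mul_assoc, e1']
        _ ≤ 8 * (4 * ε^2 * R^4) := by
            refine mul_le_mul_of_nonneg_left ?_ (by norm_num)
            exact mul_le_mul ht4 ha4 (by positivity) (by positivity)
        _ = 32 * R^4 * ε^2 := by ring
    -- term 2
    have e2 : b^2 - Real.sin v ^2 / s^2 = (v^2 - Real.sin v ^2) / s^2 := by
      rw [hvdef]; field_simp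
    have ht2' : |b^2 - Real.sin v ^2 / s^2| ≤ R^4 * ε^2 := by
      rw [e2, abs_of_nonneg (div_nonneg hvl hs2.le)]
      rw [div_le_iff₀ hs2]
      have hs4 : s^2 ≤ ε^2 := pow_le_pow_left₀ hs0.le hsε 2
      have hsb : s^2 * b^4 ≤ ε^2 * R^4 :=
        mul_le_mul hs4 hb4 (by positivity) (sq_nonneg ε)
      calc v^2 - Real.sin v ^2 ≤ v^4 := hvu
        _ = s^2 * (s^2 * b^4) := by rw [hvdef]; ring
        _ ≤ s^2 * (ε^2 * R^4) := mul_le_mul_of_nonneg_left hsb (sq_nonneg s)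
        _ = R^4 * ε^2 * s^2 := by ring
    -- combine
    have hdecomp : a^2 + b^2 - Real.cosh z^2
        = (a^2 - c^2 * Real.sinh u ^2 / s^2) + (b^2 - Real.sin v ^2 / s^2) := by
      rw [hcosh2]; ring
    calc |a^2 + b^2 - Real.cosh z^2|
        ≤ |a^2 - c^2 * Real.sinh u ^2 / s^2| + |b^2 - Real.sin v ^2 / s^2| := by
          rw [hdecomp]; exact abs_add_le _ _
      _ ≤ 32 * R^4 * ε^2 + R^4 * ε^2 := add_le_add ht1 ht2'
      _ = (33 * R^4) * ε^2 := by ring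
      _ ≤ (33 * R^4 + M/ε₀^2 + 1) * ε^2 := by
          have h0 : (0:ℝ) ≤ M/ε₀^2 := by positivity
          exact mul_le_mul_of_nonneg_right (by linarith) (sq_nonneg ε)
end
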